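/- arXiv:2308.07653 — 9 statements merged into one kernel-verified Lean document; each statement's English description precedes it below -/
import Mathlib

section
/- For every graph H, m(H) ≤ 2^{k'(H)}, where k'(H) denotes the edge-connectivity of H. That is, the maximum cardinality of a connectivity code for H is at most 2 raised to the edge-connectivity of H. -/
open SimpleGraph

/-- A collection `𝒢` of spanning subgraphs of `H` is a *connectivity code* for `H` if the
symmetric difference of any two distinct members of `𝒢` is a connected (spanning) subgraph
of `H`. -/
def IsConnCode {V : Type*} (H : SimpleGraph V) (𝒢 : Set (SimpleGraph V)) : Prop :=
  (∀ G ∈ 𝒢, G ≤ H) ∧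
    ∀ G₁ ∈ 𝒢, ∀ G₂ ∈ 𝒢, G₁ ≠ G₂ → (symmDiff G₁ G₂).Connected

/-- `mCode H` is the maximum possible cardinality of a connectivity code for `H`. -/
noncomputable def mCode {V : Type*} [Fintype V] (H : SimpleGraph V) : ℕ :=
  sSup {n : ℕ | ∃ 𝒢 : Set (SimpleGraph V), IsConnCode H 𝒢 ∧ 𝒢.ncard = n}

/-- The set of edges of `H` with one endpoint in `W` and the other in its complement. -/
def cutEdgeSet {V : Type*} (H : SimpleGraph V) (W : Set V) : Set (Sym2 V) :=
  {e | e ∈ H.edgeSet ∧ ∃ x ∈ W, ∃ y ∈ Wᶜ, e = s(x, y)}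

/-- The edge-connectivity of `H`: the minimum number of edges whose deletion disconnects `H`. -/
noncomputable def edgeConn {V : Type*} [Fintype V] (H : SimpleGraph V) : ℕ :=
  sInf {n : ℕ | ∃ F : Set (Sym2 V), F ⊆ H.edgeSet ∧ F.ncard = n ∧
    ¬(H.deleteEdges F).Connected}

/-- For every graph `H`, `m(H) ≤ 2 ^ k'(H)` where `k'(H)` is the edge-connectivity of `H`. -/
theorem stmt1 {V : Type*} [Fintype V] (H : SimpleGraph V) :
    mCode H ≤ 2 ^ edgeConn H := by
  classical
  have key : ∀ 𝒢 : Set (SimpleGraph V), IsConnCode H 𝒢 → 𝒢.ncard ≤ 2 ^ edgeConn H := by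
    intro 𝒢 h𝒢
    by_cases hS : {n : ℕ | ∃ F : Set (Sym2 V), F ⊆ H.edgeSet ∧ F.ncard = n ∧
        ¬(H.deleteEdges F).Connected}.Nonempty
    · obtain ⟨F, hFsub, hFcard, hFdis⟩ := Nat.sInf_mem hS
      have hFfin : F.Finite := Set.toFinite F
      -- injection from 𝒢 into (↥F → Prop)
      have hinj : Set.InjOn (fun G : SimpleGraph V => (fun e : F => (e : Sym2 V) ∈ G.edgeSet)) 𝒢 := by
        intro G₁ hG₁ G₂ hG₂ heq
        by_contra hne
        have hconn := h𝒢.2 G₁ hG₁ G₂ hG₂ hne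
        have hle : symmDiff G₁ G₂ ≤ H.deleteEdges F := by
          intro a b hab
          simp only [symmDiff_def, SimpleGraph.sup_adj, SimpleGraph.sdiff_adj] at hab
          constructor
          · rcases hab with ⟨h1, _⟩ | ⟨h2, _⟩
            · exact h𝒢.1 G₁ hG₁ h1
            · exact h𝒢.1 G₂ hG₂ h2
          · intro hmem
            rw [SimpleGraph.fromEdgeSet_adj] at hmem
            have := congrFun heq ⟨s(a, b), hmem.1⟩
            simp only [SimpleGraph.mem_edgeSet] at this
            rcases hab with ⟨h1, h2⟩ | ⟨h2, h1⟩
            · exact h2 (this ▸ h1)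
            · exact h1 (this ▸ h2)
        exact hFdis (hconn.mono hle)
      have h1 : 𝒢.ncard = Nat.card 𝒢 := Nat.card_coe_set_eq 𝒢
      have h2 : Nat.card 𝒢 ≤ Nat.card (F → Prop) := by
        have : Finite (F → Prop) := by
          have : Finite F := hFfin
          infer_instance
        exact Nat.card_le_card_of_injective
          (fun G : 𝒢 => (fun e : F => (e : Sym2 V) ∈ (G : SimpleGraph V).edgeSet))
          (fun G₁ G₂ h => Subtype.ext (hinj G₁.2 G₂.2 h))
      have h3 : Nat.card (F → Prop) = 2 ^ F.ncard := by
        have : Finite F := hFfin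
        rw [Nat.card_fun, Nat.card_coe_set_eq]
        congr 1
        simp [Nat.card_eq_fintype_card]
      rw [h1]
      calc Nat.card 𝒢 ≤ Nat.card (F → Prop) := h2
        _ = 2 ^ F.ncard := h3
        _ = 2 ^ edgeConn H := by rw [hFcard]; rfl
    · -- set empty: deleting all edges keeps connectivity ⇒ V subsingleton
      have hconn : (H.deleteEdges H.edgeSet).Connected := by
        by_contra hc
        exact hS ⟨H.edgeSet.ncard, H.edgeSet, le_refl _, rfl, hc⟩
      rw [SimpleGraph.deleteEdges_edgeSet, sdiff_self] at hconn
      have hsub : Subsingleton V := ⟨fun a b => by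
        obtain ⟨p⟩ := hconn.preconnected a b
        cases p with
        | nil => rfl
        | cons h _ => exact h.elim⟩
      have hg : Subsingleton (SimpleGraph V) := ⟨fun G₁ G₂ => by
        ext a b
        constructor
        · intro h; exact (G₁.ne_of_adj h (Subsingleton.elim a b)).elim
        · intro h; exact (G₂.ne_of_adj h (Subsingleton.elim a b)).elim⟩
      have : 𝒢.ncard ≤ 1 := by
        rw [Set.ncard_le_one_iff (Set.toFinite _)]
        intro a b _ _
        exact Subsingleton.elim a b
      exact this.trans Nat.one_le_two_pow
  unfold mCode
  have hne : {n : ℕ | ∃ 𝒢 : Set (SimpleGraph V), IsConnCode H 𝒢 ∧ 𝒢.ncard = n}.Nonempty :=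
    ⟨0, ∅, ⟨fun G h => h.elim, fun G₁ h => h.elim⟩, Set.ncard_empty _⟩
  exact csSup_le hne (by rintro n ⟨𝒢, h𝒢, rfl⟩; exact key 𝒢 h𝒢)
end

section
/- Let H = (V, E) be a d-regular graph, let E' be a subset of E, and let v : E' → (ℤ/2)^d be an assignment of a vector to each edge of E'. Suppose that for every vertex u, the set of vectors assigned to the edges of E' incident with u is linearly independent. Then the assignment can be completed to an assignment v : E → (ℤ/2)^d so that for every vertex u, the set of d vectors assigned to the d edges incident with u forms a basis of (ℤ/2)^d. -/
open SimpleGraph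

section aux
variable {K M : Type*} [Field K] [AddCommGroup M] [Module K M]

lemma exists_notMem_pair {p q : Submodule K M} (hp : p ≠ ⊤) (hq : q ≠ ⊤) :
    ∃ z : M, z ∉ p ∧ z ∉ q := by
  obtain ⟨a, ha⟩ := not_forall.mp (fun h => hp (Submodule.eq_top_iff'.mpr h))
  obtain ⟨b, hb⟩ := not_forall.mp (fun h => hq (Submodule.eq_top_iff'.mpr h))
  by_cases hab : a ∈ q
  · by_cases hba : b ∈ p
    · refine ⟨a + b, fun h => ha ?_, fun h => hb ?_⟩
      · simpa using p.sub_mem h hba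
      · simpa using q.sub_mem h hab
    · exact ⟨b, hba, hb⟩
  · exact ⟨a, ha, hab⟩

end aux

/-- equiv between two encodings of "elements of S that are in T" -/
def subEquiv {α : Type*} (S T : Set α) : {e : ↥S // (e : α) ∈ T} ≃ ↥(S ∩ T) where
  toFun e := ⟨e.1.1, e.1.2, e.2⟩
  invFun e := ⟨⟨e.1, e.2.1⟩, e.2.2⟩
  left_inv e := rfl
  right_inv e := rfl

lemma key_lemma {V : Type*} [Fintype V] (H : SimpleGraph V) (d : ℕ)
    (hreg : ∀ u : V, (H.neighborSet u).ncard = d) :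
    ∀ n (A : Set (Sym2 V)), A ⊆ H.edgeSet → (H.edgeSet \ A).ncard ≤ n →
    ∀ w : Sym2 V → (Fin d → ZMod 2),
    (∀ u, LinearIndependent (ZMod 2) (fun f : ↥(A ∩ H.incidenceSet u) => w f)) →
    ∃ w' : Sym2 V → (Fin d → ZMod 2), (∀ e ∈ A, w' e = w e) ∧
      ∀ u, LinearIndependent (ZMod 2)
        (fun f : ↥(H.edgeSet ∩ H.incidenceSet u) => w' f) := by
  classical
  intro n
  induction n with
  | zero =>
    intro A hA h0 w hw
    have hEA : H.edgeSet = A := by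
      have : (H.edgeSet \ A) = ∅ :=
        (Set.ncard_eq_zero (Set.toFinite _)).mp (Nat.le_zero.mp h0)
      have h1 : H.edgeSet ⊆ A := by
        intro e he
        by_contra heA
        exact absurd (this ▸ Set.mem_diff_of_mem he heA) (Set.notMem_empty e)
      exact h1.antisymm hA
    exact ⟨w, fun e _ => rfl, by rw [hEA]; exact hw⟩
  | succ n ih =>
    intro A hA hcard w hw
    by_cases hAe : H.edgeSet ⊆ A
    · have hEA : H.edgeSet = A := hAe.antisymm hA
      exact ⟨w, fun e _ => rfl, by rw [hEA]; exact hw⟩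
    obtain ⟨e, heE, heA⟩ := Set.not_subset.mp hAe
    induction e using Sym2.ind with
    | _ x y =>
    have hx : s(x, y) ∈ H.incidenceSet x := ⟨heE, Sym2.mem_mk_left x y⟩
    have hy : s(x, y) ∈ H.incidenceSet y := ⟨heE, Sym2.mem_mk_right x y⟩
    have hproper : ∀ u : V, s(x, y) ∈ H.incidenceSet u →
        Submodule.span (ZMod 2) (w '' (A ∩ H.incidenceSet u)) ≠ ⊤ := by
      intro u hu htop
      have hlt : (A ∩ H.incidenceSet u).ncard < d := by
        have hss : (A ∩ H.incidenceSet u) ⊂ H.incidenceSet u :=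
          ⟨Set.inter_subset_right, fun hsub => heA (hsub hu).1⟩
        have h2 := Set.ncard_lt_ncard hss (Set.toFinite _)
        have h3 : (H.incidenceSet u).ncard = d := by
          rw [← Nat.card_coe_set_eq,
            Nat.card_congr (H.incidenceSetEquivNeighborSet u),
            Nat.card_coe_set_eq, hreg u]
        rwa [h3] at h2
      have h1 : Module.finrank (ZMod 2)
          (Submodule.span (ZMod 2) (w '' (A ∩ H.incidenceSet u))) ≤
          (A ∩ H.incidenceSet u).ncard := by
        have hfi : (w '' (A ∩ H.incidenceSet u)).Finite := Set.toFinite _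
        haveI := hfi.fintype
        have ha := finrank_span_le_card (R := ZMod 2) (w '' (A ∩ H.incidenceSet u))
        rw [← Set.ncard_eq_toFinset_card'] at ha
        exact ha.trans (Set.ncard_image_le (Set.toFinite _))
      rw [htop, finrank_top] at h1
      have hfr : Module.finrank (ZMod 2) (Fin d → ZMod 2) = d := Module.finrank_fin_fun (ZMod 2)
      omega
    obtain ⟨z, hzx, hzy⟩ := exists_notMem_pair (hproper x hx) (hproper y hy)
    set w' : Sym2 V → (Fin d → ZMod 2) := Function.update w s(x, y) z with hw'def
    have hagree : ∀ a ∈ A, w' a = w a := by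
      intro a ha
      exact Function.update_of_ne (by rintro rfl; exact heA ha) _ _
    have hres : ∀ u, (fun f : ↥(A ∩ H.incidenceSet u) => w' ↑f) = fun f : ↥(A ∩ H.incidenceSet u) => w ↑f := by
      intro u; funext f; exact hagree _ f.2.1
    have hw' : ∀ u, LinearIndependent (ZMod 2)
        (fun f : ↥((insert s(x, y) A) ∩ H.incidenceSet u) => w' ↑f) := by
      intro u
      by_cases hu : s(x, y) ∈ H.incidenceSet u
      · rw [Set.insert_inter_of_mem hu]
        refine (linearIndepOn_insert (f := w') (fun h => heA h.1)).mpr ?_; unfold LinearIndepOn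
        refine ⟨by rw [hres u]; exact hw u, ?_⟩
        have himg : w' '' (A ∩ H.incidenceSet u) = w '' (A ∩ H.incidenceSet u) :=
          Set.image_congr fun a ha => hagree _ ha.1
        rw [himg, hw'def, Function.update_self]
        rcases Sym2.mem_iff.mp hu.2 with h | h
        · subst h; exact hzx
        · subst h; exact hzy
      · rw [Set.insert_inter_of_notMem hu, hres u]
        exact hw u
    have hcard' : (H.edgeSet \ insert s(x, y) A).ncard ≤ n := by
      have h1 : H.edgeSet \ insert s(x, y) A = (H.edgeSet \ A) \ {s(x, y)} := by
        ext a
        simp only [Set.mem_diff, Set.mem_insert_iff, Set.mem_singleton_iff]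
        tauto
      have h2 := Set.ncard_diff_singleton_of_mem
        (show s(x, y) ∈ H.edgeSet \ A from ⟨heE, heA⟩)
      rw [h1, h2]
      omega
    obtain ⟨w'', hag, hind⟩ := ih (insert s(x, y) A)
      (Set.insert_subset heE hA) hcard' w' hw'
    exact ⟨w'', fun a ha => (hag a (Set.mem_insert_of_mem _ ha)).trans (hagree a ha), hind⟩

/-- **Lemma 2.2.** Let `H` be `d`-regular, `E' ⊆ E(H)` and `v : E' → (ℤ/2)^d` be such that
for every vertex `u` the vectors assigned to the edges of `E'` incident with `u` are linearly
independent. Then the assignment extends to all of `E(H)` so that for every vertex the vectors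
on the `d` incident edges form a basis of `(ℤ/2)^d`. -/
theorem stmt3 {V : Type*} [Fintype V] (H : SimpleGraph V) (d : ℕ)
    (hreg : ∀ u : V, (H.neighborSet u).ncard = d)
    (E' : Set (Sym2 V)) (hE' : E' ⊆ H.edgeSet)
    (v : E' → (Fin d → ZMod 2))
    (hind : ∀ u : V, LinearIndependent (ZMod 2)
      (fun e : {e : E' // (e : Sym2 V) ∈ H.incidenceSet u} => v e.1)) :
    ∃ w : H.edgeSet → (Fin d → ZMod 2),
      (∀ e : E', w ⟨e, hE' e.2⟩ = v e) ∧
      ∀ u : V,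
        LinearIndependent (ZMod 2)
          (fun e : {e : H.edgeSet // (e : Sym2 V) ∈ H.incidenceSet u} => w e.1) ∧
        Submodule.span (ZMod 2)
          (w '' {e : H.edgeSet | (e : Sym2 V) ∈ H.incidenceSet u}) = ⊤ := by
  classical
  set w₀ : Sym2 V → (Fin d → ZMod 2) := fun e => if h : e ∈ E' then v ⟨e, h⟩ else 0 with hw₀def
  have hw0 : ∀ u, LinearIndependent (ZMod 2) (fun f : ↥(E' ∩ H.incidenceSet u) => w₀ ↑f) := by
    intro u
    have h := (hind u).comp ((subEquiv E' (H.incidenceSet u)).symm) (Equiv.injective _)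
    have heq : (fun f : ↥(E' ∩ H.incidenceSet u) => w₀ ↑f) =
        fun f : ↥(E' ∩ H.incidenceSet u) => v ((subEquiv E' (H.incidenceSet u)).symm f).1 := by
      funext f
      simp only [hw₀def]
      rw [dif_pos f.2.1]
      rfl
    rw [heq]; exact h
  obtain ⟨w', hag, hindep⟩ := key_lemma H d hreg ((H.edgeSet \ E').ncard) E' hE' le_rfl w₀ hw0
  refine ⟨fun e => w' e, ?_, ?_⟩
  · intro e
    show w' ↑e = v e
    rw [hag ↑e e.2]
    simp only [hw₀def]
    rw [dif_pos e.2]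
  · intro u
    constructor
    · exact (hindep u).comp (subEquiv H.edgeSet (H.incidenceSet u)) (Equiv.injective _)
    · have himg : (fun e : H.edgeSet => w' e) ''
          {e : H.edgeSet | (e : Sym2 V) ∈ H.incidenceSet u}
          = Set.range (fun f : ↥(H.edgeSet ∩ H.incidenceSet u) => w' ↑f) := by
        ext a
        constructor
        · rintro ⟨⟨e, he1⟩, he2, rfl⟩
          exact ⟨⟨e, he1, he2⟩, rfl⟩
        · rintro ⟨⟨e, he1, he2⟩, rfl⟩
          exact ⟨⟨e, he1⟩, he2, rfl⟩
      rw [himg]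
      haveI : Fintype ↥(H.edgeSet ∩ H.incidenceSet u) := (Set.toFinite _).fintype
      apply (hindep u).span_eq_top_of_card_eq_finrank'
      rw [← Nat.card_eq_fintype_card,
        Set.inter_eq_self_of_subset_right (H.incidenceSet_subset u),
        Nat.card_congr (H.incidenceSetEquivNeighborSet u),
        Nat.card_coe_set_eq, hreg u, Module.finrank_fin_fun]
end

section
/- For every even positive integer k and every integer d ≥ k, any d-regular graph contains a spanning subgraph in which every vertex has degree either k or k − 1. -/
open SimpleGraph

/-- One peeling step: from degrees in `{m, m-1}` to degrees in `{m-1, m-2}`. -/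
lemma step_lemma {V : Type*} [Fintype V] (G : SimpleGraph V) (m : ℕ) (hm : 2 ≤ m)
    (hdeg : ∀ v, (G.neighborSet v).ncard = m ∨ (G.neighborSet v).ncard = m - 1) :
    ∃ G' : SimpleGraph V, G' ≤ G ∧
      ∀ v, (G'.neighborSet v).ncard = m - 1 ∨ (G'.neighborSet v).ncard = m - 2 := by
  classical
  set S : Set V := {v | (G.neighborSet v).ncard = m} with hSdef
  let nf : V → Finset V := fun v => (G.neighborSet v).toFinset
  have hmemnf : ∀ v w : V, w ∈ nf v ↔ G.Adj v w := by
    intro v w; simp [nf, Set.mem_toFinset]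
  have hcard : ∀ v, (nf v).card = (G.neighborSet v).ncard := fun v =>
    (Set.ncard_eq_toFinset_card' _).symm
  -- Hall's condition
  have hall : ∀ A : Finset S, A.card ≤ (A.biUnion fun a => nf (a : V)).card := by
    intro A
    set B := A.biUnion fun a => nf (a : V) with hB
    have hsub : ∀ a ∈ A, nf (a : V) ⊆ B := fun a ha => Finset.subset_biUnion_of_mem (fun a : S => nf (a : V)) ha
    have hmA : m * A.card ≤ m * B.card := by
      calc m * A.card = ∑ _a ∈ A, m := by rw [Finset.sum_const, smul_eq_mul, mul_comm]
        _ = ∑ a ∈ A, (nf (a : V)).card := by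
            refine Finset.sum_congr rfl fun a _ => ?_
            rw [hcard]; exact (a.2 : (G.neighborSet (a : V)).ncard = m).symm
        _ = ∑ a ∈ A, (B.filter (fun b => b ∈ nf (a : V))).card := by
            refine Finset.sum_congr rfl fun a ha => ?_
            rw [Finset.filter_mem_eq_inter, Finset.inter_eq_right.2 (hsub a ha)]
        _ = ∑ a ∈ A, ∑ b ∈ B, (if b ∈ nf (a : V) then 1 else 0) := by
            exact Finset.sum_congr rfl fun a _ => Finset.card_filter _ _
        _ = ∑ b ∈ B, ∑ a ∈ A, (if b ∈ nf (a : V) then 1 else 0) := Finset.sum_comm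
        _ = ∑ b ∈ B, (A.filter (fun a : S => b ∈ nf (a : V))).card := by
            exact Finset.sum_congr rfl fun b _ => (Finset.card_filter _ _).symm
        _ ≤ ∑ _b ∈ B, m := by
            refine Finset.sum_le_sum fun b _ => ?_
            have h1 : (A.filter (fun a : S => b ∈ nf (a : V))).card ≤ (nf b).card := by
              refine Finset.card_le_card_of_injOn (fun a : S => (a : V)) ?_ ?_
              · intro a ha
                simp only [Finset.mem_coe, Finset.mem_filter] at ha ⊢
                rw [hmemnf]
                exact ((hmemnf _ _).1 ha.2).symm
              · exact Subtype.coe_injective.injOn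
            have h2 : (nf b).card ≤ m := by
              rw [hcard]; rcases hdeg b with h | h <;> omega
            omega
        _ = m * B.card := by rw [Finset.sum_const, smul_eq_mul, mul_comm]
    exact Nat.le_of_mul_le_mul_left hmA (by omega)
  obtain ⟨f, hfinj, hfmem⟩ :=
    (Finset.all_card_le_biUnion_card_iff_exists_injective (fun a : S => nf (a : V))).1 hall
  have hfadj : ∀ a : S, G.Adj (a : V) (f a) := fun a => (hmemnf _ _).1 (hfmem a)
  -- The removed edge set
  set F : Set (Sym2 V) := {e | ∃ a : S, e = s((a : V), f a)} with hFdef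
  refine ⟨G.deleteEdges F, G.deleteEdges_le F, fun v => ?_⟩
  set D : Set V := {w | G.Adj v w ∧ s(v, w) ∈ F} with hDdef
  have hDN : D ⊆ G.neighborSet v := fun w hw => hw.1
  have hNv : (G.deleteEdges F).neighborSet v = G.neighborSet v \ D := by
    ext w
    simp only [mem_neighborSet, deleteEdges_adj, Set.mem_diff, hDdef, Set.mem_setOf_eq]
    tauto
  have hE : ((G.deleteEdges F).neighborSet v).ncard
      = (G.neighborSet v).ncard - D.ncard := by
    rw [hNv, Set.ncard_diff hDN (Set.toFinite _)]
  -- bound D by two subsingleton sets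
  set D1 : Set V := {w | ∃ h : v ∈ S, w = f ⟨v, h⟩} with hD1def
  set D2 : Set V := {w | ∃ a : S, (a : V) = w ∧ f a = v} with hD2def
  have hDsub : D ⊆ D1 ∪ D2 := by
    rintro w ⟨-, hwF⟩
    obtain ⟨a, ha⟩ := hwF
    rw [Sym2.eq_iff] at ha
    rcases ha with ⟨h1, h2⟩ | ⟨h1, h2⟩
    · left
      have hv : v ∈ S := by rw [h1]; exact a.2
      refine ⟨hv, ?_⟩
      have : a = ⟨v, hv⟩ := Subtype.ext h1.symm
      rw [h2, this]
    · right
      exact ⟨a, h2.symm, h1.symm⟩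
  have hD1 : D1.ncard ≤ 1 := by
    rw [Set.ncard_le_one (Set.toFinite _)]
    rintro x ⟨hx, hx2⟩ y ⟨hy, hy2⟩
    rw [hx2, hy2]
  have hD2 : D2.ncard ≤ 1 := by
    rw [Set.ncard_le_one (Set.toFinite _)]
    rintro x ⟨a, ha1, ha2⟩ y ⟨b, hb1, hb2⟩
    have : a = b := hfinj (by rw [ha2, hb2])
    rw [← ha1, ← hb1, this]
  have hDle : D.ncard ≤ 2 := by
    calc D.ncard ≤ (D1 ∪ D2).ncard := Set.ncard_le_ncard hDsub (Set.toFinite _)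
      _ ≤ D1.ncard + D2.ncard := Set.ncard_union_le _ _
      _ ≤ 2 := by omega
  by_cases hvS : v ∈ S
  · -- v has degree m and loses 1 or 2 edges
    have hNm : (G.neighborSet v).ncard = m := hvS
    have hDpos : 0 < D.ncard := by
      rw [Set.ncard_pos (Set.toFinite _)]
      exact ⟨f ⟨v, hvS⟩, hfadj ⟨v, hvS⟩, ⟨⟨v, hvS⟩, rfl⟩⟩
    omega
  · -- v has degree m - 1 and loses 0 or 1 edges
    have hNm : (G.neighborSet v).ncard = m - 1 := by
      rcases hdeg v with h | h
      · exact absurd h hvS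
      · exact h
    have hD1e : D1 = ∅ := by
      ext x
      simp only [hD1def, Set.mem_setOf_eq, Set.mem_empty_iff_false, iff_false]
      rintro ⟨h, -⟩; exact hvS h
    have hDle1 : D.ncard ≤ 1 := by
      calc D.ncard ≤ (D1 ∪ D2).ncard := Set.ncard_le_ncard hDsub (Set.toFinite _)
        _ = D2.ncard := by rw [hD1e, Set.empty_union]
        _ ≤ 1 := hD2
    omega


/-- Peeling induction: from degrees in `{k+j, k+j-1}` down to `{k, k-1}`. -/
lemma peel_lemma {V : Type*} [Fintype V] (k : ℕ) (hk : 0 < k) :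
    ∀ (j : ℕ) (G : SimpleGraph V),
      (∀ v, (G.neighborSet v).ncard = k + j ∨ (G.neighborSet v).ncard = k + j - 1) →
      ∃ G' : SimpleGraph V, G' ≤ G ∧
        ∀ v, (G'.neighborSet v).ncard = k ∨ (G'.neighborSet v).ncard = k - 1 := by
  intro j
  induction j with
  | zero => exact fun G hG => ⟨G, le_rfl, by simpa using hG⟩
  | succ j ih =>
    intro G hG
    obtain ⟨G'', h1, h2⟩ := step_lemma G (k + j + 1) (by omega)
      (by intro v; have := hG v; omega)
    obtain ⟨G', h3, h4⟩ := ih G'' (by intro v; have := h2 v; omega)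
    exact ⟨G', le_trans h3 h1, h4⟩

/-- **Lemma 2.3.** For every even positive `k` and every `d ≥ k`, any `d`-regular graph
contains a spanning subgraph in which every degree is either `k` or `k - 1`. -/
theorem stmt4 {V : Type*} [Fintype V] (H : SimpleGraph V) (d k : ℕ)
    (hke : Even k) (hkpos : 0 < k) (hkd : k ≤ d)
    (hreg : ∀ v : V, (H.neighborSet v).ncard = d) :
    ∃ H' : SimpleGraph V, H' ≤ H ∧
      ∀ v : V, (H'.neighborSet v).ncard = k ∨ (H'.neighborSet v).ncard = k - 1 := by
  exact peel_lemma k hkpos (d - k) H fun v => Or.inl (by rw [hreg v]; omega)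
end

section
/- Let H = (V, E) be a graph and let E_1, E_2, …, E_s be sets of edges of H, each of cardinality at most t. Suppose that for every 1 ≤ i < j ≤ s, deleting the edges of E_i ∪ E_j from H leaves a disconnected graph. If s > (2^t + 1)·2^{t−1}, then m(H) ≤ 2^t. -/
open SimpleGraph

/-- **Lemma 3.1.** Let `E₁, …, E_s` be sets of at most `t` edges of `H` such that the removal
of `E_i ∪ E_j` disconnects `H` for all `i < j`. If `s > (2^t + 1) 2^(t-1)` then
`m(H) ≤ 2 ^ t`. -/
theorem stmt6 {V : Type*} [Fintype V] (H : SimpleGraph V) (s t : ℕ)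
    (E : Fin s → Set (Sym2 V))
    (hsub : ∀ i, E i ⊆ H.edgeSet)
    (hcard : ∀ i, (E i).ncard ≤ t)
    (hdisc : ∀ i j : Fin s, i < j → ¬(H.deleteEdges (E i ∪ E j)).Connected)
    (hs : (2 ^ t + 1) * 2 ^ (t - 1) < s) :
    mCode H ≤ 2 ^ t := by
  classical
  unfold mCode
  refine csSup_le' ?_
  rintro m ⟨𝒢, ⟨hle, hconn⟩, rfl⟩
  by_contra hbig
  push_neg at hbig
  obtain ⟨𝒢₀, h𝒢₀sub, h𝒢₀card⟩ := Set.exists_subset_card_eq (show 2 ^ t + 1 ≤ 𝒢.ncard from hbig)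
  have h𝒢₀fin : 𝒢₀.Finite := Set.finite_of_ncard_ne_zero (by rw [h𝒢₀card]; positivity)
  haveI := h𝒢₀fin.fintype
  have hcardF : Fintype.card ↥𝒢₀ = 2 ^ t + 1 := by
    rw [← Nat.card_eq_fintype_card, Nat.card_coe_set_eq, h𝒢₀card]
  let e := Fintype.equivFinOfCardEq hcardF
  let g : Fin (2 ^ t + 1) → SimpleGraph V := fun a => ((e.symm a : ↥𝒢₀) : SimpleGraph V)
  have ginj : Function.Injective g := fun a b h => by
    have := Subtype.val_injective h
    exact e.symm.injective this
  have gmem : ∀ a, g a ∈ 𝒢 := fun a => h𝒢₀sub (e.symm a).2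
  -- Key: the symmetric difference of two distinct code members must use an edge of E i ∪ E j
  have keyA : ∀ a b : Fin (2 ^ t + 1), a ≠ b → ∀ i j : Fin s, i < j →
      ∃ f ∈ E i ∪ E j, f ∈ (symmDiff (g a) (g b)).edgeSet := by
    intro a b hab i j hij
    by_contra hno
    push_neg at hno
    have hsub' : symmDiff (g a) (g b) ≤ H := by
      rw [symmDiff_def]
      exact sup_le (sdiff_le.trans (hle _ (gmem a))) (sdiff_le.trans (hle _ (gmem b)))
    have hle' : symmDiff (g a) (g b) ≤ H.deleteEdges (E i ∪ E j) := by
      intro x y hxy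
      rw [SimpleGraph.deleteEdges_adj]
      exact ⟨hsub' hxy, fun hmem => hno _ hmem ((SimpleGraph.mem_edgeSet _).mpr hxy)⟩
    have hg : g a ≠ g b := fun h => hab (ginj h)
    exact hdisc i j hij ((hconn _ (gmem a) _ (gmem b) hg).mono hle')
  -- predicate: the symm diff of g a, g b avoids E i
  let D : Fin s → Fin (2 ^ t + 1) → Fin (2 ^ t + 1) → Prop :=
    fun i a b => ∀ f ∈ E i, f ∉ (symmDiff (g a) (g b)).edgeSet
  have Dcomm : ∀ i a b, D i a b → D i b a := by
    intro i a b h f hf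
    rw [symmDiff_comm]
    exact h f hf
  have keyB : ∀ a b : Fin (2 ^ t + 1), a ≠ b → ∀ i j : Fin s, i ≠ j → D i a b → D j a b → False := by
    intro a b hab i j hij hdi hdj
    rcases lt_or_gt_of_ne hij with h | h
    · obtain ⟨f, hf, hff⟩ := keyA a b hab i j h
      rcases hf with hf | hf
      exacts [hdi f hf hff, hdj f hf hff]
    · obtain ⟨f, hf, hff⟩ := keyA a b hab j i h
      rcases hf with hf | hf
      exacts [hdj f hf hff, hdi f hf hff]
  let Bad : Fin s → Prop := fun i => ∃ a b : Fin (2 ^ t + 1), a ≠ b ∧ D i a b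
  have hn0 : 0 < 2 ^ t + 1 := Nat.succ_pos _
  let z0 : Fin (2 ^ t + 1) := ⟨0, hn0⟩
  let fB : Fin s → Sym2 (Fin (2 ^ t + 1)) := fun i =>
    if h : Bad i then s(h.choose, h.choose_spec.choose) else s(z0, z0)
  have fBspec : ∀ i, Bad i → ∃ a b : Fin (2 ^ t + 1), a ≠ b ∧ D i a b ∧ fB i = s(a, b) := by
    intro i h
    refine ⟨h.choose, h.choose_spec.choose, h.choose_spec.choose_spec.1,
      h.choose_spec.choose_spec.2, ?_⟩
    simp only [fB, dif_pos h]
  have hBadcard : (Finset.univ.filter Bad).card ≤ (2 ^ t + 1) * 2 ^ (t - 1) := by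
    have h1 : (Finset.univ.filter Bad).card ≤
        (Finset.univ.filter fun z : Sym2 (Fin (2 ^ t + 1)) => ¬z.IsDiag).card := by
      apply Finset.card_le_card_of_injOn fB
      · intro i hi
        obtain ⟨a, b, hab, _, hfi⟩ := fBspec i (Finset.mem_filter.mp hi).2
        simp only [Finset.mem_coe, Finset.mem_filter, Finset.mem_univ, true_and, hfi, Sym2.mk_isDiag_iff]
        exact hab
      · intro i hi j hj hfij
        by_contra hij
        obtain ⟨a, b, hab, hDi, hfi⟩ := fBspec i (Finset.mem_filter.mp hi).2
        obtain ⟨a', b', hab', hDj, hfj⟩ := fBspec j (Finset.mem_filter.mp hj).2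
        rw [hfi, hfj, Sym2.eq_iff] at hfij
        have hDj' : D j a b := by
          rcases hfij with ⟨h1, h2⟩ | ⟨h1, h2⟩
          · rw [h1, h2]; exact hDj
          · rw [h1, h2]; exact Dcomm _ _ _ hDj
        exact keyB a b hab i j hij hDi hDj'
    have h2 : (Finset.univ.filter fun z : Sym2 (Fin (2 ^ t + 1)) => ¬z.IsDiag).card = (2 ^ t + 1).choose 2 := by
      rw [← Fintype.card_subtype, Sym2.card_subtype_not_diag, Fintype.card_fin]
    have h3 : (2 ^ t + 1).choose 2 ≤ (2 ^ t + 1) * 2 ^ (t - 1) := by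
      rw [Nat.choose_two_right]
      rw [Nat.add_sub_cancel]
      have h4 : 2 ^ t ≤ 2 ^ (t - 1) * 2 := by
        cases t with
        | zero => simp
        | succ k => simp [pow_succ]
      calc (2 ^ t + 1) * 2 ^ t / 2 ≤ (2 ^ t + 1) * (2 ^ (t - 1) * 2) / 2 :=
            Nat.div_le_div_right (Nat.mul_le_mul_left _ h4)
        _ = (2 ^ t + 1) * 2 ^ (t - 1) := by
            rw [← mul_assoc, Nat.mul_div_cancel _ (by norm_num)]
    rw [h2] at h1
    exact h1.trans h3
  -- find a good index
  have hex : ∃ i : Fin s, ¬ Bad i := by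
    by_contra hall
    push_neg at hall
    have : (Finset.univ.filter Bad) = Finset.univ := by
      apply Finset.eq_univ_iff_forall.mpr
      intro i; exact Finset.mem_filter.mpr ⟨Finset.mem_univ i, hall i⟩
    rw [this, Finset.card_univ, Fintype.card_fin] at hBadcard
    omega
  obtain ⟨i₀, hgood⟩ := hex
  -- final injection into the powerset of E i₀
  have hEfin : (E i₀).Finite := Set.toFinite _
  let F : Finset (Sym2 V) := hEfin.toFinset
  let φ : Fin (2 ^ t + 1) → Finset (Sym2 V) := fun a => F.filter (fun f => f ∈ (g a).edgeSet)
  have hφmem : ∀ a : Fin (2 ^ t + 1), a ∈ (Finset.univ : Finset (Fin (2 ^ t + 1))) → φ a ∈ F.powerset := by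
    intro a _
    exact Finset.mem_powerset.mpr (Finset.filter_subset _ _)
  have hφinj : Set.InjOn φ ↑(Finset.univ : Finset (Fin (2 ^ t + 1))) := by
    intro a _ b _ hab
    by_contra hne
    refine hgood ⟨a, b, hne, fun f hf hmem => ?_⟩
    have hfF : f ∈ F := hEfin.mem_toFinset.mpr hf
    have hiff : f ∈ (g a).edgeSet ↔ f ∈ (g b).edgeSet := by
      constructor
      · intro h
        have : f ∈ φ a := Finset.mem_filter.mpr ⟨hfF, h⟩
        rw [hab] at this
        exact (Finset.mem_filter.mp this).2
      · intro h
        have : f ∈ φ b := Finset.mem_filter.mpr ⟨hfF, h⟩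
        rw [← hab] at this
        exact (Finset.mem_filter.mp this).2
    have hsd : (symmDiff (g a) (g b)).edgeSet =
        ((g a).edgeSet \ (g b).edgeSet) ∪ ((g b).edgeSet \ (g a).edgeSet) := by
      rw [symmDiff_def, SimpleGraph.edgeSet_sup, SimpleGraph.edgeSet_sdiff,
        SimpleGraph.edgeSet_sdiff]
    rw [hsd] at hmem
    rcases hmem with ⟨h1, h2⟩ | ⟨h1, h2⟩
    · exact h2 (hiff.mp h1)
    · exact h2 (hiff.mpr h1)
  have hcount : 2 ^ t + 1 ≤ 2 ^ t := by
    have := Finset.card_le_card_of_injOn φ hφmem hφinj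
    rw [Finset.card_univ, Fintype.card_fin, Finset.card_powerset] at this
    have hFcard : F.card ≤ t := by
      rw [← Set.ncard_eq_toFinset_card (E i₀) hEfin]
      exact hcard i₀
    calc 2 ^ t + 1 ≤ 2 ^ F.card := this
      _ ≤ 2 ^ t := Nat.pow_le_pow_right (by norm_num) hFcard
  exact Nat.not_succ_le_self _ hcount
end

section
/- For every integer t ≥ 2 and every integer s > (2^t + 1)·2^{t−1}, the Cartesian product graph H_{t,s} = K_t × C_s of the complete graph on t vertices with the cycle on s vertices is (t+1)-regular, has edge-connectivity exactly t + 1, and satisfies m(H_{t,s}) ≤ 2^t. -/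
open SimpleGraph

section AuxStmt7

open Finset

open Fin.NatCast in
lemma no_switch {n : ℕ} (f : Fin (n+3) → Prop) (p q : Fin (n+3)) (hp : f p) (hq : ¬ f q)
    (h : ∀ k, f k → f (k+1)) : False := by
  have key : ∀ j : ℕ, f (p + (j : Fin (n+3))) := by
    intro j
    induction j with
    | zero => simpa using hp
    | succ j ih =>
      have := h _ ih
      rw [show ((j+1 : ℕ) : Fin (n+3)) = (j : Fin (n+3)) + 1 by push_cast; ring]
      rwa [← add_assoc]
  have := key (q - p).val
  rw [Fin.cast_val_eq_self, add_sub_cancel] at this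
  exact hq this

lemma switch {n : ℕ} (f : Fin (n+3) → Prop) (p q : Fin (n+3)) (hp : f p) (hq : ¬ f q) :
    (∃ k, f k ∧ ¬ f (k+1)) ∧ (∃ k, ¬ f k ∧ f (k+1)) := by
  constructor
  · by_contra hc; push_neg at hc; exact no_switch f p q hp hq hc
  · by_contra hc; push_neg at hc
    exact no_switch (fun k => ¬ f k) q p hq (not_not_intro hp) hc

lemma fin_add_one_val {n : ℕ} (k : Fin (n+3)) :
    (k+1).val = if k.val = n+2 then 0 else k.val + 1 := by
  rw [Fin.val_add_one]
  by_cases h : k = Fin.last (n+2)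
  · subst h; simp [Fin.ext_iff]
  · have : k.val ≠ n + 2 := by
      intro hv; exact h (Fin.ext (by simpa using hv))
    simp [h, this]

lemma fin_ne_succ {n : ℕ} (k : Fin (n+3)) : k ≠ k + 1 := by
  intro h; have := congrArg Fin.val h; rw [fin_add_one_val] at this
  split_ifs at this <;> omega

lemma fin_succ_ne_pred {n : ℕ} (k l : Fin (n+3)) (h1 : k = l + 1) (h2 : l = k + 1) : False := by
  have h1v := congrArg Fin.val h1; have h2v := congrArg Fin.val h2
  rw [fin_add_one_val] at h1v h2v
  have := k.isLt; have := l.isLt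
  split_ifs at h1v h2v <;> omega
open SimpleGraph Finset

lemma cross_of_connected {V : Type*} {G : SimpleGraph V} (hG : G.Connected) {W : Set V} {x y : V}
    (hx : x ∈ W) (hy : y ∉ W) : ∃ a b, G.Adj a b ∧ a ∈ W ∧ b ∉ W := by
  obtain ⟨p⟩ := hG.preconnected x y
  obtain ⟨d, _, h1, h2⟩ := p.exists_boundary_dart W hx hy
  exact ⟨d.fst, d.snd, d.adj, h1, h2⟩

lemma cycle_adj_succ {n : ℕ} (k : Fin (n+3)) : (cycleGraph (n+3)).Adj k (k+1) := by
  rw [show n + 3 = (n+1)+2 by rfl] at *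
  rw [cycleGraph_adj]
  right; rw [add_sub_cancel_left]

lemma col_edges {t m : ℕ} (W : Set (Fin t × Fin (m+3))) (F : Set (Sym2 (Fin t × Fin (m+3))))
    (hF : ∀ x y : Fin t × Fin (m+3),
      ((⊤ : SimpleGraph (Fin t)) □ cycleGraph (m+3)).Adj x y → x ∈ W → y ∉ W → s(x,y) ∈ F)
    (i : Fin (m+3)) (a b : Fin t) (ha : (a,i) ∈ W) (hb : (b,i) ∉ W) :
    ∃ E : Finset (Sym2 (Fin t × Fin (m+3))), E.card = t - 1 ∧ ↑E ⊆ F ∧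
      ∀ e ∈ E, ∀ x ∈ e, (x : Fin t × Fin (m+3)).2 = i := by
  classical
  have hab : a ≠ b := fun h => hb (h ▸ ha)
  set g : Fin t → Sym2 (Fin t × Fin (m+3)) :=
    fun c => if (c,i) ∈ W then s((c,i),(b,i)) else s((a,i),(c,i)) with hg
  refine ⟨(univ.erase a).image g, ?_, ?_, ?_⟩
  · rw [Finset.card_image_of_injOn, card_erase_of_mem (mem_univ a), card_univ, Fintype.card_fin]
    intro c₁ h₁ c₂ h₂ hge
    have hc₁a : c₁ ≠ a := (Finset.mem_erase.mp h₁).1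
    have hc₂a : c₂ ≠ a := (Finset.mem_erase.mp h₂).1
    by_cases w₁ : (c₁,i) ∈ W <;> by_cases w₂ : (c₂,i) ∈ W <;>
      simp only [hg, w₁, w₂, if_pos, if_neg, if_true, if_false, Sym2.eq_iff, Prod.mk.injEq] at hge
    all_goals aesop
  · intro e he
    simp only [Finset.coe_image, Set.mem_image, Finset.mem_coe, Finset.mem_erase] at he
    obtain ⟨c, ⟨hca, -⟩, rfl⟩ := he
    by_cases w : (c,i) ∈ W
    · have hcb : c ≠ b := fun h => hb (h ▸ w)
      rw [hg]; simp only [w, if_true, if_pos]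
      exact hF _ _ (by simp [boxProd_adj, top_adj, hcb]) w hb
    · rw [hg]; simp only [w, if_false, if_neg, not_false_iff]
      exact hF _ _ (by simp [boxProd_adj, top_adj, Ne.symm hca]) ha w
  · intro e he x hx
    simp only [Finset.mem_image, Finset.mem_erase] at he
    obtain ⟨c, -, rfl⟩ := he
    have hx' : x ∈ (if (c,i) ∈ W then s(((c,i) : Fin t × Fin (m+3)),(b,i)) else s((a,i),(c,i))) := hx
    clear hx
    split_ifs at hx' with hw <;> rcases Sym2.mem_iff.mp hx' with rfl | rfl <;> rfl

lemma isoperim {t m : ℕ} (ht : 2 ≤ t) (W : Set (Fin t × Fin (m+3)))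
    (F : Set (Sym2 (Fin t × Fin (m+3))))
    (hF : ∀ x y : Fin t × Fin (m+3),
      ((⊤ : SimpleGraph (Fin t)) □ cycleGraph (m+3)).Adj x y → x ∈ W → y ∉ W → s(x,y) ∈ F)
    (x₀ y₀ : Fin t × Fin (m+3)) (hx₀ : x₀ ∈ W) (hy₀ : y₀ ∉ W) : t + 1 ≤ F.ncard := by
  classical
  -- reduce to finding a finset of edges inside F
  suffices h : ∃ E : Finset (Sym2 (Fin t × Fin (m+3))), ↑E ⊆ F ∧ t + 1 ≤ E.card by
    obtain ⟨E, hEF, hcard⟩ := h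
    calc t + 1 ≤ E.card := hcard
    _ = (↑E : Set (Sym2 (Fin t × Fin (m+3)))).ncard := (Set.ncard_coe_finset E).symm
    _ ≤ F.ncard := Set.ncard_le_ncard hEF F.toFinite
  have hmatch : ∀ (a : Fin t) (k : Fin (m+3)), (a,k) ∈ W → (a,k+1) ∉ W →
      s(((a,k) : Fin t × Fin (m+3)),(a,k+1)) ∈ F := by
    intro a k h1 h2
    exact hF _ _ (by simp [boxProd_adj, cycle_adj_succ k]) h1 h2
  have hmatch' : ∀ (a : Fin t) (k : Fin (m+3)), (a,k) ∉ W → (a,k+1) ∈ W →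
      s(((a,k+1) : Fin t × Fin (m+3)),(a,k)) ∈ F := by
    intro a k h1 h2
    exact hF _ _ (by simp [boxProd_adj, (cycle_adj_succ k).symm]) h2 h1
  by_cases hrow : ∃ (a : Fin t) (k k' : Fin (m+3)), (a,k) ∈ W ∧ (a,k') ∉ W
  · obtain ⟨a, k, k', hk, hk'⟩ := hrow
    obtain ⟨⟨k₁,h11,h12⟩,⟨k₂,h21,h22⟩⟩ := switch (fun i => (a,i) ∈ W) k k' hk hk'
    have hk₁₂ : k₁ ≠ k₂ := fun h => h21 (h ▸ h11)
    set e₁ : Sym2 (Fin t × Fin (m+3)) := s((a,k₁),(a,k₁+1)) with he₁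
    set e₂ : Sym2 (Fin t × Fin (m+3)) := s((a,k₂+1),(a,k₂)) with he₂
    have he₁F : e₁ ∈ F := hmatch a k₁ h11 h12
    have he₂F : e₂ ∈ F := hmatch' a k₂ h21 h22
    have he₁₂ : e₁ ≠ e₂ := by
      rw [he₁, he₂]
      intro hhh
      rw [Sym2.eq_iff] at hhh
      rcases hhh with ⟨h1, h2⟩ | ⟨h1, h2⟩
      · exact fin_succ_ne_pred _ _ (congrArg Prod.snd h1) (congrArg Prod.snd h2).symm
      · exact hk₁₂ (congrArg Prod.snd h1)
    by_cases hcol : ∃ i : Fin (m+3), (∃ c, (c,i) ∈ W) ∧ (∃ c, (c,i) ∉ W)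
    · obtain ⟨i, ⟨ca, hca⟩, ⟨cb, hcb⟩⟩ := hcol
      obtain ⟨E, hcard, hEF, htag⟩ := col_edges W F hF i ca cb hca hcb
      refine ⟨E ∪ {e₁, e₂}, ?_, ?_⟩
      · intro e he
        rcases Finset.mem_union.mp he with h | h
        · exact hEF h
        · rcases Finset.mem_insert.mp h with rfl | h
          · exact he₁F
          · rw [Finset.mem_singleton.mp h]; exact he₂F
      · rw [Finset.card_union_of_disjoint, hcard, Finset.card_pair he₁₂]
        · omega
        · rw [Finset.disjoint_left]
          intro e he he'
          rcases Finset.mem_insert.mp he' with rfl | h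
          · have t1 := htag _ he (a,k₁) (Sym2.mem_mk_left _ _)
            have t2 := htag _ he (a,k₁+1) (Sym2.mem_mk_right _ _)
            exact fin_ne_succ k₁ (t1.trans t2.symm)
          · rw [Finset.mem_singleton.mp h] at he
            have t1 := htag _ he (a,k₂+1) (Sym2.mem_mk_left _ _)
            have t2 := htag _ he (a,k₂) (Sym2.mem_mk_right _ _)
            exact fin_ne_succ k₂ (t2.trans t1.symm)
    · push_neg at hcol
      -- every column is constant
      have hcc : ∀ (i : Fin (m+3)) (c c' : Fin t), (c,i) ∈ W → (c',i) ∈ W := by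
        intro i c c' hc
        exact hcol i ⟨c, hc⟩ c'
      refine ⟨univ.image (fun c : Fin t => s(((c,k₁) : Fin t × Fin (m+3)),(c,k₁+1))) ∪
              univ.image (fun c : Fin t => s(((c,k₂+1) : Fin t × Fin (m+3)),(c,k₂))), ?_, ?_⟩
      · intro e he
        rcases Finset.mem_union.mp he with h | h <;>
          · simp only [Finset.mem_image] at h
            obtain ⟨c, -, rfl⟩ := h
            first
              | exact hmatch c k₁ (hcc _ a c h11) (fun hcw => h12 (hcc _ c a hcw))
              | exact hmatch' c k₂ (fun hcw => h21 (hcc _ c a hcw)) (hcc _ a c h22)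
      · have hinj1 : Set.InjOn (fun c : Fin t => s(((c,k₁) : Fin t × Fin (m+3)),(c,k₁+1)))
            ↑(univ : Finset (Fin t)) := by
          intro c₁ _ c₂ _ h
          rw [Sym2.eq_iff] at h
          rcases h with ⟨h1, -⟩ | ⟨h1, -⟩ <;> exact congrArg Prod.fst h1
        have hinj2 : Set.InjOn (fun c : Fin t => s(((c,k₂+1) : Fin t × Fin (m+3)),(c,k₂)))
            ↑(univ : Finset (Fin t)) := by
          intro c₁ _ c₂ _ h
          rw [Sym2.eq_iff] at h
          rcases h with ⟨h1, -⟩ | ⟨h1, -⟩ <;> exact congrArg Prod.fst h1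
        rw [Finset.card_union_of_disjoint, Finset.card_image_of_injOn hinj1,
          Finset.card_image_of_injOn hinj2, card_univ, Fintype.card_fin]
        · omega
        · rw [Finset.disjoint_left]
          intro e he he'
          simp only [Finset.mem_image] at he he'
          obtain ⟨c, -, rfl⟩ := he
          obtain ⟨c', -, h⟩ := he'
          rw [Sym2.eq_iff] at h
          rcases h with ⟨h1, h2⟩ | ⟨h1, h2⟩
          · exact fin_succ_ne_pred k₁ k₂ (congrArg Prod.snd h1).symm (congrArg Prod.snd h2)
          · exact hk₁₂ (congrArg Prod.snd h2).symm
  · push_neg at hrow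
    obtain ⟨a₀, k₀⟩ := x₀
    obtain ⟨b₀, l₀⟩ := y₀
    have hain : ∀ k, (a₀, k) ∈ W := fun k => hrow a₀ k₀ k hx₀
    have hbout : ∀ k, (b₀, k) ∉ W := fun k hk => hy₀ (hrow b₀ k l₀ hk)
    have h3 : 3 ≤ m + 3 := by omega
    set i0 : Fin (m+3) := ⟨0, by omega⟩
    set i1 : Fin (m+3) := ⟨1, by omega⟩
    set i2 : Fin (m+3) := ⟨2, by omega⟩
    obtain ⟨E0, hc0, hF0, ht0⟩ := col_edges W F hF i0 a₀ b₀ (hain i0) (hbout i0)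
    obtain ⟨E1, hc1, hF1, ht1⟩ := col_edges W F hF i1 a₀ b₀ (hain i1) (hbout i1)
    obtain ⟨E2, hc2, hF2, ht2⟩ := col_edges W F hF i2 a₀ b₀ (hain i2) (hbout i2)
    have hdisj : ∀ (Ea Eb : Finset (Sym2 (Fin t × Fin (m+3)))) (ia ib : Fin (m+3)),
        ia ≠ ib → (∀ e ∈ Ea, ∀ x ∈ e, (x : Fin t × Fin (m+3)).2 = ia) →
        (∀ e ∈ Eb, ∀ x ∈ e, (x : Fin t × Fin (m+3)).2 = ib) → Disjoint Ea Eb := by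
      intro Ea Eb ia ib hne ha hb
      rw [Finset.disjoint_left]
      intro e hea heb
      induction e with
      | _ x y => exact hne ((ha _ hea x (Sym2.mem_mk_left _ _)).symm.trans
          (hb _ heb x (Sym2.mem_mk_left _ _)))
    have h01 : (i0 : Fin (m+3)) ≠ i1 := by simp [i0, i1, Fin.ext_iff]
    have h02 : (i0 : Fin (m+3)) ≠ i2 := by simp [i0, i2, Fin.ext_iff]
    have h12 : (i1 : Fin (m+3)) ≠ i2 := by simp [i1, i2, Fin.ext_iff]
    refine ⟨E0 ∪ E1 ∪ E2, ?_, ?_⟩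
    · intro e he
      rcases Finset.mem_union.mp he with h | h
      · rcases Finset.mem_union.mp h with h | h
        · exact hF0 h
        · exact hF1 h
      · exact hF2 h
    · rw [Finset.card_union_of_disjoint, Finset.card_union_of_disjoint, hc0, hc1, hc2]
      · omega
      · exact hdisj _ _ _ _ h01 ht0 ht1
      · rw [Finset.disjoint_union_left]
        exact ⟨hdisj _ _ _ _ h02 ht0 ht2, hdisj _ _ _ _ h12 ht1 ht2⟩

lemma part1 {t m : ℕ} (ht : 2 ≤ t) (v : Fin t × Fin (m+3)) :
    (((⊤ : SimpleGraph (Fin t)) □ cycleGraph (m+3)).neighborSet v).ncard = t + 1 := by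
  letI : Fintype (((⊤ : SimpleGraph (Fin t)) □ cycleGraph (m+3)).neighborSet v) :=
    SimpleGraph.boxProdFintypeNeighborSet v
  rw [← Nat.card_coe_set_eq, Nat.card_eq_fintype_card,
    SimpleGraph.card_neighborSet_eq_degree, SimpleGraph.degree_boxProd,
    SimpleGraph.complete_graph_degree, Fintype.card_fin]
  have h2 : (cycleGraph (m+3)).degree v.2 = 2 := cycleGraph_degree_three_le
  omega

lemma inc_card {t m : ℕ} (ht : 2 ≤ t) (v : Fin t × Fin (m+3)) :
    (((⊤ : SimpleGraph (Fin t)) □ cycleGraph (m+3)).incidenceSet v).ncard = t + 1 := by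
  letI : DecidableRel ((⊤ : SimpleGraph (Fin t)) □ cycleGraph (m+3)).Adj :=
    fun x y => decidable_of_iff _ boxProd_adj.symm
  rw [← Nat.card_coe_set_eq, Nat.card_eq_fintype_card,
    SimpleGraph.card_incidenceSet_eq_degree, SimpleGraph.degree_boxProd,
    SimpleGraph.complete_graph_degree, Fintype.card_fin]
  have h2 : (cycleGraph (m+3)).degree v.2 = 2 := cycleGraph_degree_three_le
  omega

lemma part2 {t m : ℕ} (ht : 2 ≤ t) :
    edgeConn ((⊤ : SimpleGraph (Fin t)) □ cycleGraph (m+3)) = t + 1 := by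
  classical
  unfold edgeConn
  set H := (⊤ : SimpleGraph (Fin t)) □ cycleGraph (m+3) with hH
  set v₀ : Fin t × Fin (m+3) := (⟨0, by omega⟩, ⟨0, by omega⟩) with hv₀
  have hmem : t + 1 ∈ {n : ℕ | ∃ F : Set (Sym2 (Fin t × Fin (m+3))), F ⊆ H.edgeSet ∧
      F.ncard = n ∧ ¬(H.deleteEdges F).Connected} := by
    refine ⟨H.incidenceSet v₀, H.incidenceSet_subset v₀, ?_, ?_⟩
    · exact inc_card ht v₀
    · intro hcon
      set v₁ : Fin t × Fin (m+3) := (⟨1, by omega⟩, ⟨0, by omega⟩) with hv₁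
      have hne : v₀ ≠ v₁ := by simp [hv₀, hv₁, Prod.ext_iff, Fin.ext_iff]
      obtain ⟨a, b, hadj, ha, hb⟩ := cross_of_connected hcon (W := {v₀})
        (Set.mem_singleton v₀) (fun h => hne (Set.mem_singleton_iff.mp h).symm)
      rw [Set.mem_singleton_iff] at ha
      subst ha
      rw [SimpleGraph.deleteEdges_adj] at hadj
      exact hadj.2 ⟨H.mem_edgeSet.mpr hadj.1, Sym2.mem_mk_left _ _⟩
  refine le_antisymm (Nat.sInf_le hmem) (le_csInf ⟨_, hmem⟩ ?_)
  rintro n ⟨F, hFE, hFn, hdis⟩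
  have hne : Nonempty (Fin t × Fin (m+3)) := ⟨v₀⟩
  rw [SimpleGraph.connected_iff] at hdis
  push_neg at hdis
  have hpre : ¬ (H.deleteEdges F).Preconnected := fun h => @IsEmpty.false _ (hdis h) v₀
  rw [SimpleGraph.Preconnected] at hpre
  push_neg at hpre
  obtain ⟨u, v, huv⟩ := hpre
  set W : Set (Fin t × Fin (m+3)) := {x | (H.deleteEdges F).Reachable u x} with hW
  have hu : u ∈ W := SimpleGraph.Reachable.refl u
  have hv : v ∉ W := huv
  have hcut : ∀ x y : Fin t × Fin (m+3), H.Adj x y → x ∈ W → y ∉ W → s(x,y) ∈ F := by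
    intro x y hxy hx hy
    by_contra hnF
    exact hy (hx.trans (SimpleGraph.Adj.reachable
      ((SimpleGraph.deleteEdges_adj).mpr ⟨hxy, hnF⟩)))
  rw [← hFn]
  exact isoperim ht W F hcut u v hu hv

lemma no_cut_disconnected {t m : ℕ} {G G' : SimpleGraph (Fin t × Fin (m+3))} (ht : 2 ≤ t)
    (hG : G ≤ (⊤ : SimpleGraph (Fin t)) □ cycleGraph (m+3))
    (hG' : G' ≤ (⊤ : SimpleGraph (Fin t)) □ cycleGraph (m+3))
    {i j : Fin (m+3)} (hij : i < j)
    (hi : ∀ a : Fin t, G.Adj (a,i) (a,i+1) ↔ G'.Adj (a,i) (a,i+1))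
    (hj : ∀ a : Fin t, G.Adj (a,j) (a,j+1) ↔ G'.Adj (a,j) (a,j+1)) :
    ¬ (symmDiff G G').Connected := by
  intro hcon
  have hle : symmDiff G G' ≤ (⊤ : SimpleGraph (Fin t)) □ cycleGraph (m+3) :=
    symmDiff_le_sup.trans (sup_le hG hG')
  have hDi : ∀ a : Fin t, ¬ (symmDiff G G').Adj (a,i) (a,i+1) := by
    intro a h
    rw [symmDiff_def] at h
    rcases h with h | h
    · rw [sdiff_adj] at h; exact h.2 ((hi a).mp h.1)
    · rw [sdiff_adj] at h; exact h.2 ((hi a).mpr h.1)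
  have hDj : ∀ a : Fin t, ¬ (symmDiff G G').Adj (a,j) (a,j+1) := by
    intro a h
    rw [symmDiff_def] at h
    rcases h with h | h
    · rw [sdiff_adj] at h; exact h.2 ((hj a).mp h.1)
    · rw [sdiff_adj] at h; exact h.2 ((hj a).mpr h.1)
  set W : Set (Fin t × Fin (m+3)) := {x | i < x.2 ∧ x.2 ≤ j} with hWdef
  have hx : ((⟨0, by omega⟩ : Fin t), j) ∈ W := ⟨hij, le_refl j⟩
  have hy : ((⟨0, by omega⟩ : Fin t), i) ∉ W := fun h => lt_irrefl i h.1
  obtain ⟨p, q, hadj, hp, hq⟩ := cross_of_connected hcon hx hy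
  obtain ⟨a, k⟩ := p
  obtain ⟨b, l⟩ := q
  have hH := hle hadj
  rcases boxProd_adj.mp hH with ⟨-, hsnd⟩ | ⟨hcyc, hfst⟩
  · simp only at hsnd
    exact hq (hsnd ▸ hp)
  · simp only at hfst hcyc
    subst hfst
    have hpi : i < k ∧ k ≤ j := hp
    have hqi : ¬ (i < l ∧ l ≤ j) := hq
    have h1 : i.val < k.val := hpi.1
    have h2 : k.val ≤ j.val := hpi.2
    have h3 : j.val < m + 3 := j.isLt
    rcases (cycleGraph_adj (n := m+1)).mp hcyc with hc | hc
    · -- k - l = 1, i.e. k = l + 1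
      have hk : k = l + 1 := by rw [sub_eq_iff_eq_add] at hc; exact hc.trans (add_comm 1 l)
      have hkv : k.val = if l.val = m+2 then 0 else l.val + 1 := by
        rw [hk, fin_add_one_val]
      have hli : l = i := by
        apply Fin.ext
        split_ifs at hkv with hl2
        · omega
        · by_cases hil : i.val < l.val
          · have hnle : ¬ l.val ≤ j.val := fun hle =>
              hqi ⟨Fin.lt_def.mpr hil, Fin.le_def.mpr hle⟩
            omega
          · omega
      apply hDi a
      have hh := hadj
      rw [hk, hli] at hh
      exact hh.symm
    · -- l - k = 1, i.e. l = k + 1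
      have hl : l = k + 1 := by rw [sub_eq_iff_eq_add] at hc; exact hc.trans (add_comm 1 k)
      have hlv : l.val = if k.val = m+2 then 0 else k.val + 1 := by
        rw [hl, fin_add_one_val]
      have hkj : k = j := by
        apply Fin.ext
        split_ifs at hlv with hk2
        · omega
        · have hnle : ¬ l.val ≤ j.val := fun hle =>
            hqi ⟨Fin.lt_def.mpr (by omega), Fin.le_def.mpr hle⟩
          omega
      apply hDj a
      have hh := hadj
      rw [hl, hkj] at hh
      exact hh

lemma part3 {t m : ℕ} (ht : 2 ≤ t) (hs : (2^t+1) * 2^(t-1) < m+3) :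
    mCode ((⊤ : SimpleGraph (Fin t)) □ cycleGraph (m+3)) ≤ 2^t := by
  classical
  unfold mCode
  apply csSup_le
  · exact ⟨0, ∅, ⟨fun G h => absurd h (Set.notMem_empty G),
      fun G h => absurd h (Set.notMem_empty G)⟩, Set.ncard_empty _⟩
  rintro n ⟨𝒢, hcode, rfl⟩
  by_contra hbig
  push_neg at hbig
  have hfin : 𝒢.Finite := by
    by_contra hinf
    rw [Set.Infinite.ncard hinf] at hbig
    exact Nat.not_lt_zero _ hbig
  obtain ⟨T, hTsub, hTcard⟩ := Finset.exists_subset_card_eq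
    (show 2^t+1 ≤ hfin.toFinset.card by rw [← Set.ncard_eq_toFinset_card 𝒢 hfin]; omega)
  have hTG : ∀ G ∈ T, G ∈ 𝒢 := fun G h => (Set.Finite.mem_toFinset hfin).mp (hTsub h)
  set φ : Fin (m+3) → SimpleGraph (Fin t × Fin (m+3)) → Finset (Fin t) :=
    fun i G => Finset.univ.filter (fun a => G.Adj (a,i) (a,i+1)) with hφ
  have hpigeon : ∀ i : Fin (m+3),
      ∃ p : SimpleGraph (Fin t × Fin (m+3)) × SimpleGraph (Fin t × Fin (m+3)),
      p.1 ∈ T ∧ p.2 ∈ T ∧ p.1 ≠ p.2 ∧ φ i p.1 = φ i p.2 := by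
    intro i
    obtain ⟨G, hGT, G', hG'T, hne, heq⟩ :=
      Finset.exists_ne_map_eq_of_card_lt_of_maps_to (t := (Finset.univ : Finset (Finset (Fin t))))
        (by rw [hTcard, Finset.card_univ, Fintype.card_finset, Fintype.card_fin]; omega)
        (fun G _ => Finset.mem_univ (φ i G))
    exact ⟨(G, G'), hGT, hG'T, hne, heq⟩
  choose P hP1 hP2 hP3 hP4 using hpigeon
  have hmap : ∀ i ∈ (Finset.univ : Finset (Fin (m+3))),
      ({(P i).1, (P i).2} : Finset _) ∈ T.powersetCard 2 := by
    intro i _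
    rw [Finset.mem_powersetCard]
    constructor
    · intro x hx
      rcases Finset.mem_insert.mp hx with rfl | hx
      · exact hP1 i
      · rw [Finset.mem_singleton.mp hx]; exact hP2 i
    · exact Finset.card_pair (hP3 i)
  have hcard2 : (T.powersetCard 2).card < (Finset.univ : Finset (Fin (m+3))).card := by
    rw [Finset.card_powersetCard, hTcard, Finset.card_univ, Fintype.card_fin,
      Nat.choose_two_right]
    have h2 : 2^t = 2^(t-1) * 2 := by
      rw [← pow_succ]; congr 1; omega
    have h4 : (2^t+1) * (2^t+1-1) = ((2^t+1) * 2^(t-1)) * 2 := by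
      rw [Nat.add_sub_cancel]
      calc (2^t+1) * 2^t = (2^t+1) * (2^(t-1) * 2) := by rw [← h2]
      _ = ((2^t+1) * 2^(t-1)) * 2 := by ring
    rw [h4, Nat.mul_div_cancel _ (by norm_num : 0 < 2)]
    exact hs
  obtain ⟨i, -, j, -, hij, hΨ⟩ :=
    Finset.exists_ne_map_eq_of_card_lt_of_maps_to hcard2 hmap
  -- extract the common pair
  have hCD := hP3 j
  have hC : (P j).1 ∈ ({(P i).1, (P i).2} : Finset _) := by
    rw [hΨ]; exact Finset.mem_insert_self _ _
  have hD : (P j).2 ∈ ({(P i).1, (P i).2} : Finset _) := by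
    rw [hΨ]; exact Finset.mem_insert.mpr (Or.inr (Finset.mem_singleton_self _))
  have hC' : (P j).1 = (P i).1 ∨ (P j).1 = (P i).2 := by
    rcases Finset.mem_insert.mp hC with h | h
    · exact Or.inl h
    · exact Or.inr (Finset.mem_singleton.mp h)
  have hD' : (P j).2 = (P i).1 ∨ (P j).2 = (P i).2 := by
    rcases Finset.mem_insert.mp hD with h | h
    · exact Or.inl h
    · exact Or.inr (Finset.mem_singleton.mp h)
  have hagj : φ j (P i).1 = φ j (P i).2 := by
    rcases hC' with hC1 | hC1 <;> rcases hD' with hD1 | hD1 <;>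
      first
        | exact absurd (hC1.trans hD1.symm) hCD
        | (rw [← hC1, ← hD1]; exact hP4 j)
        | (rw [← hC1, ← hD1]; exact (hP4 j).symm)
  set A := (P i).1
  set B := (P i).2
  have hA : A ≤ (⊤ : SimpleGraph (Fin t)) □ cycleGraph (m+3) := hcode.1 _ (hTG _ (hP1 i))
  have hB : B ≤ (⊤ : SimpleGraph (Fin t)) □ cycleGraph (m+3) := hcode.1 _ (hTG _ (hP2 i))
  have hconn : (symmDiff A B).Connected :=
    hcode.2 _ (hTG _ (hP1 i)) _ (hTG _ (hP2 i)) (hP3 i)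
  have hagree : ∀ (k : Fin (m+3)), φ k A = φ k B →
      ∀ a : Fin t, A.Adj (a,k) (a,k+1) ↔ B.Adj (a,k) (a,k+1) := by
    intro k hk a
    have := Finset.ext_iff.mp hk a
    simpa [hφ] using this
  rcases lt_or_gt_of_ne hij with h | h
  · exact no_cut_disconnected ht hA hB h (hagree i (hP4 i)) (hagree j hagj) hconn
  · exact no_cut_disconnected ht hA hB h (hagree j hagj) (hagree i (hP4 i)) hconn

end AuxStmt7

/-- **Proposition 3.2.** For `s > (2^t + 1) 2^(t-1)`, the Cartesian product `K_t × C_s` is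
`(t+1)`-regular, has edge-connectivity exactly `t + 1`, and satisfies
`m(K_t × C_s) ≤ 2 ^ t`. -/
theorem stmt7 (t s : ℕ) (ht : 2 ≤ t) (hs : (2 ^ t + 1) * 2 ^ (t - 1) < s) :
    (∀ v : Fin t × Fin s,
      (((⊤ : SimpleGraph (Fin t)) □ cycleGraph s).neighborSet v).ncard = t + 1) ∧
    edgeConn ((⊤ : SimpleGraph (Fin t)) □ cycleGraph s) = t + 1 ∧
    mCode ((⊤ : SimpleGraph (Fin t)) □ cycleGraph s) ≤ 2 ^ t := by
  have h1 : 4 ≤ 2 ^ t := by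
    calc 4 = 2 ^ 2 := rfl
    _ ≤ 2 ^ t := Nat.pow_le_pow_right (by norm_num) ht
  have h2 : 2 ≤ 2 ^ (t - 1) := by
    calc 2 = 2 ^ 1 := rfl
    _ ≤ 2 ^ (t - 1) := Nat.pow_le_pow_right (by norm_num) (by omega)
  have h10 : 10 ≤ (2 ^ t + 1) * 2 ^ (t - 1) := by
    calc 10 = 5 * 2 := rfl
    _ ≤ (2 ^ t + 1) * 2 ^ (t - 1) := Nat.mul_le_mul (by omega) h2
  obtain ⟨m, rfl⟩ : ∃ m, s = m + 3 := ⟨s - 3, by omega⟩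
  exact ⟨fun v => part1 ht v, part2 ht, part3 ht hs⟩
end

section
/- For every integer s > 36, the torus C_3 × C_s (the Cartesian product of a cycle of length 3 with a cycle of length s) satisfies m(C_3 × C_s) ≤ 8. -/
open SimpleGraph

/-- `G` has an edge crossing the boundary between columns `j` and `j + 1` of the torus. -/
def Crosses (n : ℕ) (G : SimpleGraph (Fin 3 × Fin (n + 2))) (j : Fin (n + 2)) : Prop :=
  ∃ i : Fin 3, G.Adj (i, j) (i, j + 1)

/-- A subgraph of the torus that avoids two distinct column boundaries `j < k` is
disconnected. -/
lemma key_lt {n : ℕ} (G : SimpleGraph (Fin 3 × Fin (n + 2)))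
    (hG : G ≤ cycleGraph 3 □ cycleGraph (n + 2)) {j k : Fin (n + 2)} (hjk : j.val < k.val)
    (hj : ¬ Crosses n G j) (hk : ¬ Crosses n G k) : ¬ G.Connected := by
  intro hc
  set W : Set (Fin 3 × Fin (n + 2)) := {p | j.val < p.2.val ∧ p.2.val ≤ k.val} with hW
  have hkW : ((0 : Fin 3), k) ∈ W := ⟨hjk, le_rfl⟩
  have hjW : ((0 : Fin 3), j) ∉ W := fun h => lt_irrefl _ h.1
  obtain ⟨p⟩ := hc ((0 : Fin 3), k) ((0 : Fin 3), j)
  obtain ⟨d, -, haW, hbW⟩ := p.exists_boundary_dart W hkW hjW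
  obtain ⟨⟨⟨i1, l⟩, i2, l'⟩, hadj⟩ := d
  have hH := hG hadj
  rw [boxProd_adj] at hH
  rcases hH with ⟨-, h2⟩ | ⟨h1, h2⟩
  · simp only at h2
    exact hbW (by simpa [hW, ← h2] using haW)
  · simp only at h1 h2
    subst h2
    have haW' : j.val < l.val ∧ l.val ≤ k.val := haW
    have hbW' : ¬ (j.val < l'.val ∧ l'.val ≤ k.val) := hbW
    rw [cycleGraph_adj] at h1
    rcases h1 with h1 | h1
    · -- `l - l' = 1`, i.e. `l = l' + 1`
      have hA : l = l' + 1 := by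
        rw [sub_eq_iff_eq_add] at h1; exact h1.trans (add_comm _ _)
      have hv := Fin.val_add_one l'
      split_ifs at hv with hlast
      · -- l' is the last element, so l has value 0, contradicting j < l
        rw [hA, hv] at haW'
        omega
      · rw [hA, hv] at haW'
        have hor : l'.val ≤ j.val ∨ k.val < l'.val := by omega
        rcases hor with hle | hgt
        · have hlj : l' = j := by
            apply Fin.ext; omega
          subst hlj
          subst hA
          exact hj ⟨i1, hadj.symm⟩
        · omega
    · -- `l' - l = 1`, i.e. `l' = l + 1`
      have hA : l' = l + 1 := by
        rw [sub_eq_iff_eq_add] at h1; exact h1.trans (add_comm _ _)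
      have hlk : l = k := by
        rcases eq_or_lt_of_le haW'.2 with heq | hlt
        · exact Fin.ext heq
        · exfalso
          have hv := Fin.val_add_one l
          split_ifs at hv with hlast
          · have : l.val = n + 1 := by rw [hlast]; rfl
            have := k.isLt; omega
          · rw [hA, hv] at hbW'
            omega
      subst hlk
      subst hA
      exact hk ⟨i1, hadj⟩

/-- A subgraph of the torus avoiding two distinct column boundaries is disconnected. -/
lemma key {n : ℕ} (G : SimpleGraph (Fin 3 × Fin (n + 2)))
    (hG : G ≤ cycleGraph 3 □ cycleGraph (n + 2)) {j k : Fin (n + 2)} (hjk : j ≠ k)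
    (hj : ¬ Crosses n G j) (hk : ¬ Crosses n G k) : ¬ G.Connected := by
  have hv : j.val ≠ k.val := fun h => hjk (Fin.ext h)
  rcases hv.lt_or_gt with h | h
  · exact key_lt G hG h hj hk
  · exact key_lt G hG h hk hj

/-- For every `s > 36`, the torus `C₃ × C_s` satisfies `m(C₃ × C_s) ≤ 8`. -/
theorem stmt8 (s : ℕ) (hs : 36 < s) :
    mCode (cycleGraph 3 □ cycleGraph s) ≤ 8 := by
  classical
  obtain ⟨t, rfl⟩ : ∃ t, s = t + 2 := ⟨s - 2, by omega⟩
  rw [mCode]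
  refine csSup_le' ?_
  rintro n ⟨𝒢, ⟨hsub, hconn⟩, rfl⟩
  by_contra hlt
  push_neg at hlt
  obtain ⟨T, hT𝒢, hTcard⟩ := Set.exists_subset_card_eq (show 9 ≤ 𝒢.ncard by omega)
  have hTfin : T.Finite := by
    by_contra h
    rw [Set.Infinite.ncard h] at hTcard
    omega
  set Tf := hTfin.toFinset with hTfdef
  have hTf : Tf.card = 9 := by
    rw [hTfdef, ← Set.ncard_eq_toFinset_card T hTfin, hTcard]
  have hmem : ∀ G ∈ Tf, G ∈ 𝒢 := fun G h => hT𝒢 (hTfin.mem_toFinset.mp h)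
  -- There is a boundary crossed by all pairwise symmetric differences.
  have hgood : ∃ j : Fin (t + 2), ∀ G₁ ∈ Tf, ∀ G₂ ∈ Tf, G₁ ≠ G₂ →
      Crosses t (symmDiff G₁ G₂) j := by
    by_contra hbad
    push_neg at hbad
    choose g₁ hg₁ g₂ hg₂ hne hav using hbad
    have hψmem : ∀ j, ({g₁ j, g₂ j} : Finset _) ∈ Tf.powersetCard 2 := by
      intro j
      rw [Finset.mem_powersetCard]
      constructor
      · intro x hx
        rcases Finset.mem_insert.mp hx with rfl | hx
        · exact hg₁ j
        · rw [Finset.mem_singleton] at hx; subst hx; exact hg₂ j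
      · exact Finset.card_pair (hne j)
    have hinj : Function.Injective
        (fun j => ({g₁ j, g₂ j} : Finset (SimpleGraph (Fin 3 × Fin (t + 2))))) := by
      intro j j' he
      by_contra hjj
      simp only at he
      have hset : ({g₁ j, g₂ j} : Set (SimpleGraph (Fin 3 × Fin (t + 2))))
          = {g₁ j', g₂ j'} := by
        have h2 := congrArg
          (fun F : Finset (SimpleGraph (Fin 3 × Fin (t + 2))) =>
            (↑F : Set (SimpleGraph (Fin 3 × Fin (t + 2))))) he
        simpa only [Finset.coe_insert, Finset.coe_singleton] using h2
      rw [Set.pair_eq_pair_iff] at hset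
      have havj' : ¬ Crosses t (symmDiff (g₁ j) (g₂ j)) j' := by
        rcases hset with ⟨h1, h2⟩ | ⟨h1, h2⟩
        · rw [h1, h2]; exact hav j'
        · rw [h1, h2, symmDiff_comm]; exact hav j'
      have hle : symmDiff (g₁ j) (g₂ j) ≤ cycleGraph 3 □ cycleGraph (t + 2) :=
        symmDiff_le (le_sup_of_le_right (hsub _ (hmem _ (hg₁ j))))
          (le_sup_of_le_right (hsub _ (hmem _ (hg₂ j))))
      exact key _ hle hjj (hav j) havj'
        (hconn _ (hmem _ (hg₁ j)) _ (hmem _ (hg₂ j)) (hne j))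
    have hcard := Finset.card_le_card_of_injOn (s := Finset.univ)
      (f := fun j => ({g₁ j, g₂ j} : Finset (SimpleGraph (Fin 3 × Fin (t + 2)))))
      (fun j _ => hψmem j) (fun a _ b _ h => hinj h)
    rw [Finset.card_univ, Fintype.card_fin, Finset.card_powersetCard, hTf] at hcard
    have h36 : (9 : ℕ).choose 2 = 36 := by decide
    omega
  obtain ⟨j, hj⟩ := hgood
  -- The restriction to the three edges of boundary `j` is injective on `Tf`.
  have hinj2 : ∀ G₁ ∈ Tf, ∀ G₂ ∈ Tf,
      (fun i : Fin 3 => G₁.Adj (i, j) (i, j + 1)) = (fun i : Fin 3 => G₂.Adj (i, j) (i, j + 1))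
      → G₁ = G₂ := by
    intro G₁ h₁ G₂ h₂ hfe
    by_contra hne'
    obtain ⟨i, hadj⟩ := hj G₁ h₁ G₂ h₂ hne'
    have heq : G₁.Adj (i, j) (i, j + 1) = G₂.Adj (i, j) (i, j + 1) := congrFun hfe i
    rw [symmDiff_def] at hadj
    simp only [sup_adj, sdiff_adj] at hadj
    rw [heq] at hadj
    tauto
  have hcard2 := Finset.card_le_card_of_injOn (s := Tf) (t := Finset.univ)
    (f := fun G : SimpleGraph (Fin 3 × Fin (t + 2)) =>
      (fun i : Fin 3 => G.Adj (i, j) (i, j + 1)))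
    (fun G _ => Finset.mem_univ _) (fun a ha b hb h => hinj2 a ha b hb h)
  rw [hTf, Finset.card_univ] at hcard2
  have h8 : Fintype.card (Fin 3 → Prop) = 8 := by
    simp [Fintype.card_fun, Fintype.card_prop]
  omega
end

section
/- Let k ≥ 1 and let s be an integer with s > 2^{k−1}(2^k + 1). Let H = H(s,k) be a graph obtained from the vertex-disjoint union of s cliques K(0), K(1), …, K(s−1), each on 2k+1 vertices, by adding for each 0 ≤ i ≤ s−1 a matching M_i of k edges between K(i) and K(i+1) (indices modulo s). Then the edge-connectivity of H is exactly 2k, and m(H) = 2^k. -/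
open SimpleGraph

/-- The graph `H(s, k)`: the disjoint union of `s` cliques `K(0), …, K(s-1)`, each on
`2k + 1` vertices, together with, for each `i`, a matching `M_i` of `k` edges between `K(i)`
and `K(i+1)` (indices mod `s`); the matching `M_i` joins the vertex `a i m` of `K(i)` to the
vertex `b i m` of `K(i+1)`, for `m = 0, …, k-1`. -/
def cliqueRing (s k : ℕ) (a b : Fin s → Fin k → Fin (2 * k + 1)) :
    SimpleGraph (Fin s × Fin (2 * k + 1)) :=
  SimpleGraph.fromRel (fun p q =>
    (p.1 = q.1 ∧ p.2 ≠ q.2) ∨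
    ((q.1 : ℕ) = ((p.1 : ℕ) + 1) % s ∧ ∃ m : Fin k, p.2 = a p.1 m ∧ q.2 = b p.1 m))


set_option linter.unusedSectionVars false
set_option linter.unusedVariables false

namespace Stmt12

lemma mod_cases {x s : ℕ} (hs : 0 < s) (hx : x < 2*s) : x % s = x ∨ x % s + s = x := by
  rcases Nat.lt_or_ge x s with h | h
  · left; exact Nat.mod_eq_of_lt h
  · right
    rw [Nat.mod_eq_sub_mod h, Nat.mod_eq_of_lt (by omega)]
    omega


/-! ### Edge-disjoint spanning double-stars in `K_{2k+1}` -/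

/-- `x` is a center of the `j`-th tree. -/
def cen {k : ℕ} (j : Fin k) (x : Fin (2*k+1)) : Prop := x.val / 2 = j.val

/-- `v` is attached to the center `c` in tree `j`. -/
def leaf {k : ℕ} (j : Fin k) (c v : Fin (2*k+1)) : Prop :=
  cen j c ∧ ¬ cen j v ∧ c.val % 2 = (if j.val < v.val / 2 then v.val % 2 else 1 - v.val % 2)

/-- Adjacency in the `j`-th spanning tree of the clique. -/
def tAdj {k : ℕ} (j : Fin k) (x y : Fin (2*k+1)) : Prop :=
  x ≠ y ∧ ((cen j x ∧ cen j y) ∨ leaf j x y ∨ leaf j y x)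

lemma tAdj_symm {k : ℕ} {j : Fin k} {x y : Fin (2*k+1)} (h : tAdj j x y) : tAdj j y x := by
  obtain ⟨hne, h⟩ := h
  exact ⟨hne.symm, by tauto⟩

lemma tAdj_ne {k : ℕ} {j : Fin k} {x y : Fin (2*k+1)} (h : tAdj j x y) : x ≠ y := h.1

/-- The trees are pairwise edge-disjoint. -/
lemma tAdj_unique {k : ℕ} {j j' : Fin k} {x y : Fin (2*k+1)}
    (h : tAdj j x y) (h' : tAdj j' x y) : j = j' := by
  obtain ⟨-, h⟩ := h
  obtain ⟨-, h'⟩ := h'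
  apply Fin.ext
  unfold leaf cen at h h'
  have hx2 : x.val % 2 < 2 := Nat.mod_lt _ (by omega)
  have hy2 : y.val % 2 < 2 := Nat.mod_lt _ (by omega)
  rcases h with ⟨h1, h2⟩ | ⟨h1, h2, h3⟩ | ⟨h1, h2, h3⟩ <;>
    rcases h' with ⟨g1, g2⟩ | ⟨g1, g2, g3⟩ | ⟨g1, g2, g3⟩ <;>
      first
        | omega
        | (rcases lt_trichotomy j.val j'.val with hlt | heq | hlt <;>
            [(split at h3 <;> split at g3 <;> omega);
             omega;
             (split at h3 <;> split at g3 <;> omega)])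

def c0 {k : ℕ} (j : Fin k) : Fin (2*k+1) := ⟨2*j.val, by omega⟩
def c1 {k : ℕ} (j : Fin k) : Fin (2*k+1) := ⟨2*j.val+1, by omega⟩

lemma cen_c0 {k : ℕ} (j : Fin k) : cen j (c0 j) := by
  have := j.isLt; simp only [cen, c0]; omega

lemma cen_c1 {k : ℕ} (j : Fin k) : cen j (c1 j) := by
  have := j.isLt; simp only [cen, c1]; omega

lemma cen_iff {k : ℕ} (j : Fin k) (v : Fin (2*k+1)) : cen j v ↔ v = c0 j ∨ v = c1 j := by
  have := j.isLt
  constructor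
  · intro h
    rcases Nat.lt_or_ge v.val (2*j.val+1) with hv | hv
    · left; apply Fin.ext; simp only [c0]; unfold cen at h; omega
    · right; apply Fin.ext; simp only [c1]; unfold cen at h; omega
  · rintro (rfl | rfl)
    exacts [cen_c0 j, cen_c1 j]

lemma tAdj_c0_c1 {k : ℕ} (j : Fin k) : tAdj j (c0 j) (c1 j) := by
  refine ⟨?_, Or.inl ⟨cen_c0 j, cen_c1 j⟩⟩
  simp only [c0, c1, ne_eq, Fin.mk.injEq]
  omega

/-- Every non-center vertex is a leaf of one of the two centers. -/
lemma exists_center {k : ℕ} (j : Fin k) (v : Fin (2*k+1)) (hv : ¬ cen j v) :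
    tAdj j (c0 j) v ∨ tAdj j (c1 j) v := by
  have := j.isLt
  have h0 : (c0 j).val % 2 = 0 := by simp only [c0]; omega
  have h1 : (c1 j).val % 2 = 1 := by simp only [c1]; omega
  have hne0 : c0 j ≠ v := fun h => hv (h ▸ cen_c0 j)
  have hne1 : c1 j ≠ v := fun h => hv (h ▸ cen_c1 j)
  by_cases hc : (if j.val < v.val / 2 then v.val % 2 else 1 - v.val % 2) = 0
  · left; exact ⟨hne0, Or.inr <| Or.inl ⟨cen_c0 j, hv, by rw [h0, hc]⟩⟩
  · right; refine ⟨hne1, Or.inr <| Or.inl ⟨cen_c1 j, hv, ?_⟩⟩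
    have hv2 : v.val % 2 < 2 := Nat.mod_lt _ (by omega)
    rw [h1]; split at hc <;> split <;> omega

/-- Transfer: if a graph contains the `j`-th tree (via an embedding of a clique),
then the image vertices are pairwise reachable. -/
lemma tAdj_reach {k : ℕ} (j : Fin k) {W : Type*} (G : SimpleGraph W) (f : Fin (2*k+1) → W)
    (hf : ∀ x y, tAdj j x y → G.Adj (f x) (f y)) (x y : Fin (2*k+1)) :
    G.Reachable (f x) (f y) := by
  suffices H : ∀ v, G.Reachable (f v) (f (c0 j)) from (H x).trans (H y).symm
  intro v
  by_cases hc : cen j v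
  · rcases (cen_iff j v).1 hc with rfl | rfl
    · exact Reachable.refl _
    · exact ((hf _ _ (tAdj_c0_c1 j)).symm).reachable
  · rcases exists_center j v hc with h | h
    · exact ((hf _ _ h).symm).reachable
    · exact ((hf _ _ h).symm).reachable.trans ((hf _ _ (tAdj_c0_c1 j)).symm).reachable

/-! ### `Fin s` arithmetic helpers -/

lemma val_add_one {s : ℕ} [NeZero s] (hs : 2 ≤ s) (i : Fin s) :
    (i + 1).val = (i.val + 1) % s := by
  have h1s : (1 : Fin s).val = 1 := by
    rw [Fin.val_one']; exact Nat.mod_eq_of_lt (by omega)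
  rw [Fin.add_def, h1s]

lemma next_ne {s : ℕ} [NeZero s] (hs : 2 ≤ s) (i : Fin s) : i + 1 ≠ i := by
  intro h
  have h2 := congrArg Fin.val h
  rw [val_add_one hs] at h2
  have := i.isLt
  rcases Nat.lt_or_ge (i.val + 1) s with h3 | h3
  · rw [Nat.mod_eq_of_lt h3] at h2; omega
  · have : i.val = s - 1 := by omega
    rw [this] at h2
    have : (s - 1 + 1) % s = 0 := by
      have : s - 1 + 1 = s := by omega
      simp [this]
    omega


lemma two_step_ne {s : ℕ} [NeZero s] (hs : 4 ≤ s) (i : Fin s) : i + 1 + 1 ≠ i := by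
  intro h
  have h1 := congrArg Fin.val h
  rw [val_add_one (by omega), val_add_one (by omega)] at h1
  have := i.isLt
  rcases Nat.lt_or_ge (i.val + 1) s with h3 | h3
  · rw [Nat.mod_eq_of_lt h3] at h1
    rcases Nat.lt_or_ge (i.val + 2) s with h4 | h4
    · rw [Nat.mod_eq_of_lt (by omega)] at h1; omega
    · have hv : i.val + 1 + 1 = s := by omega
      rw [hv, Nat.mod_self] at h1; omega
  · have hv : i.val + 1 = s := by omega
    rw [hv, Nat.mod_self, Nat.mod_eq_of_lt (by omega)] at h1
    omega

section CliqueRing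

variable {k s : ℕ} [NeZero s] {a b : Fin s → Fin k → Fin (2 * k + 1)}

/-- Same-clique adjacency in `cliqueRing`. -/
lemma adj_same (hs : 2 ≤ s) {i : Fin s} {x y : Fin (2*k+1)} :
    (cliqueRing s k a b).Adj (i, x) (i, y) ↔ x ≠ y := by
  rw [cliqueRing, fromRel_adj]
  constructor
  · rintro ⟨hne, -⟩ rfl
    exact hne rfl
  · intro hxy
    refine ⟨by simp [Prod.ext_iff, hxy], Or.inl (Or.inl ⟨rfl, hxy⟩)⟩

lemma adj_cross (hs : 4 ≤ s) {i i' : Fin s} {x y : Fin (2*k+1)} (hii : i ≠ i')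
    (h : (cliqueRing s k a b).Adj (i, x) (i', y)) :
    (i' = i + 1 ∧ ∃ m, x = a i m ∧ y = b i m) ∨
      (i = i' + 1 ∧ ∃ m, y = a i' m ∧ x = b i' m) := by
  rw [cliqueRing, fromRel_adj] at h
  obtain ⟨-, h | h⟩ := h
  · rcases h with ⟨h1, -⟩ | ⟨h1, hm⟩
    · exact absurd h1 hii
    · exact Or.inl ⟨Fin.ext (by rw [val_add_one (by omega)]; exact h1), hm⟩
  · rcases h with ⟨h1, -⟩ | ⟨h1, hm⟩
    · exact absurd h1.symm hii
    · exact Or.inr ⟨Fin.ext (by rw [val_add_one (by omega)]; exact h1), hm⟩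

lemma adj_next (hs : 4 ≤ s) {i : Fin s} {x y : Fin (2*k+1)} :
    (cliqueRing s k a b).Adj (i, x) (i + 1, y) ↔ ∃ m, x = a i m ∧ y = b i m := by
  constructor
  · intro h
    rcases adj_cross hs (fun h' => next_ne (by omega) i h'.symm) h with ⟨-, hm⟩ | ⟨h1, -⟩
    · exact hm
    · exact absurd h1.symm (two_step_ne hs i)
  · rintro ⟨m, rfl, rfl⟩
    rw [cliqueRing, fromRel_adj]
    constructor
    · intro h
      exact next_ne (by omega) i (congrArg Prod.fst h).symm
    · exact Or.inl (Or.inr ⟨(val_add_one (by omega) i).symm ▸ rfl, m, rfl, rfl⟩)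

/-- Any adjacency of a subgraph of `cliqueRing` is within a clique or between
consecutive cliques. -/
lemma adj_structure (hs : 4 ≤ s) {D : SimpleGraph (Fin s × Fin (2*k+1))}
    (hD : D ≤ cliqueRing s k a b) {p q : Fin s × Fin (2*k+1)} (h : D.Adj p q) :
    p.1 = q.1 ∨ q.1 = p.1 + 1 ∨ p.1 = q.1 + 1 := by
  by_cases hpq : p.1 = q.1
  · exact Or.inl hpq
  · obtain ⟨i, x⟩ := p
    obtain ⟨i', y⟩ := q
    rcases adj_cross hs hpq (hD h) with ⟨h1, -⟩ | ⟨h1, -⟩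
    · exact Or.inr (Or.inl h1)
    · exact Or.inr (Or.inr h1)

/-- The matching edge `m` of the matching `M i`. -/
def me (a b : Fin s → Fin k → Fin (2 * k + 1)) (i : Fin s) (m : Fin k) :
    Sym2 (Fin s × Fin (2*k+1)) :=
  s((i, a i m), (i + 1, b i m))

lemma me_mem_edgeSet (hs : 4 ≤ s) (i : Fin s) (m : Fin k) :
    me a b i m ∈ (cliqueRing s k a b).edgeSet := by
  simp only [me]
  rw [mem_edgeSet, adj_next hs]
  exact ⟨m, rfl, rfl⟩

lemma me_inj_m (hs : 4 ≤ s) (ha : ∀ i, Function.Injective (a i)) {i : Fin s} {m m' : Fin k}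
    (h : me a b i m = me a b i m') : m = m' := by
  simp only [me, Sym2.eq_iff] at h
  rcases h with ⟨h1, -⟩ | ⟨h1, h2⟩
  · exact ha i (congrArg Prod.snd h1)
  · exact absurd (congrArg Prod.fst h1) (next_ne (by omega) i).symm

lemma me_ne_of_ne (hs : 4 ≤ s) {i i' : Fin s} (hii : i ≠ i') (m m' : Fin k) :
    me a b i m ≠ me a b i' m' := by
  simp only [me, ne_eq, Sym2.eq_iff, not_or]
  constructor
  · rintro ⟨h1, -⟩
    exact hii (congrArg Prod.fst h1)
  · rintro ⟨h1, h2⟩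
    have e1 : i = i' + 1 := congrArg Prod.fst h1
    have e2 : i + 1 = i' := congrArg Prod.fst h2
    have : i + 1 + 1 = i := by rw [e2, ← e1]
    exact two_step_ne hs i this

end CliqueRing


section Machinery

variable {k s : ℕ} [NeZero s] {a b : Fin s → Fin k → Fin (2 * k + 1)}

lemma fin_val_one (hs : 2 ≤ s) : (1 : Fin s).val = 1 := by
  rw [Fin.val_one']; exact Nat.mod_eq_of_lt (by omega)

lemma fin_sub_one_val {x : Fin s} (hx : x ≠ 0) : (x - 1).val = x.val - 1 := by
  have hxv : 1 ≤ x.val := by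
    rcases Nat.eq_zero_or_pos x.val with h | h
    · exact absurd (Fin.ext h) hx
    · exact h
  have hs2 : 2 ≤ s := by have := x.isLt; omega
  rw [Fin.sub_def, fin_val_one hs2]
  show (s - 1 + x.val) % s = x.val - 1
  have := x.isLt
  have hlt := Nat.mod_lt (s - 1 + x.val) (show 0 < s by omega)
  rcases mod_cases (show 0 < s by omega) (show s - 1 + x.val < 2*s by omega) with h | h <;> omega

lemma fin_add_one_val_of_ne {x : Fin s} (hx : (x + 1 : Fin s) ≠ 0) :
    (x + 1).val = x.val + 1 := by
  have hs2 : 2 ≤ s := by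
    rcases Nat.lt_or_ge s 2 with h | h
    · interval_cases s
      · exact absurd rfl (NeZero.ne 0)
      · exact absurd (Subsingleton.elim _ _) hx
    · exact h
  rw [val_add_one hs2]
  have := x.isLt
  rcases mod_cases (show 0 < s by omega) (show x.val + 1 < 2*s by omega) with h | h
  · omega
  · exfalso
    have hv : (x + 1).val = 0 := by rw [val_add_one hs2]; omega
    exact hx (Fin.ext hv)

/-- If each clique is internally connected and consecutive cliques are linked except
possibly at `i₀`, the graph is connected. -/
lemma ring_connected (hk : 1 ≤ k) (hs : 2 ≤ s) (D : SimpleGraph (Fin s × Fin (2*k+1)))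
    (i₀ : Fin s)
    (hclq : ∀ (i : Fin s) (x y : Fin (2*k+1)), D.Reachable (i, x) (i, y))
    (hlink : ∀ i : Fin s, i ≠ i₀ → ∃ x y, D.Adj (i, x) (i + 1, y)) : D.Connected := by
  have hz : (0 : ℕ) < 2*k+1 := by omega
  set z0 : Fin (2*k+1) := ⟨0, hz⟩ with hz0
  rw [connected_iff]
  refine ⟨?_, ⟨(0, z0)⟩⟩
  have key : ∀ (n : ℕ) (j : Fin s), (j - (i₀+1)).val = n →
      ∀ x, D.Reachable (j, x) (i₀ + 1, z0) := by
    intro n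
    induction n with
    | zero =>
      intro j hj x
      have hjeq : j = i₀ + 1 := by
        have h0 : j - (i₀ + 1) = 0 := Fin.ext (by simpa using hj)
        exact sub_eq_zero.mp h0
      subst hjeq
      exact hclq _ _ _
    | succ n ih =>
      intro j hj x
      set w : Fin s := j - (i₀ + 1) with hw
      have hwne : w ≠ 0 := by
        intro h
        rw [h] at hj
        simp at hj
      have hj' : j - 1 ≠ i₀ := by
        intro h
        have h2 : j = i₀ + 1 := by rw [← h]; abel
        apply hwne
        rw [hw, h2, sub_self]
      obtain ⟨x', y', hadj⟩ := hlink (j - 1) hj'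
      have hjj : j - 1 + 1 = j := by abel
      rw [hjj] at hadj
      have hd : ((j - 1) - (i₀ + 1)).val = n := by
        have e1 : (j - 1) - (i₀ + 1) = w - 1 := by rw [hw]; abel
        rw [e1, fin_sub_one_val hwne, hj]
        omega
      exact ((hclq j x y').trans (hadj.symm).reachable).trans ((hclq (j-1) x' x').trans (ih _ hd x'))
  intro p q
  exact (key _ p.1 rfl p.2).trans (key _ q.1 rfl q.2).symm

/-- If the links between cliques `i, i+1` and between `i', i'+1` are both absent from a
subgraph `D` of the clique ring, then `D` is disconnected. -/
lemma split_disconnected (hs : 4 ≤ s) {D : SimpleGraph (Fin s × Fin (2*k+1))}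
    (hD : D ≤ cliqueRing s k a b) {i i' : Fin s} (hii : i ≠ i')
    (hcut : ∀ x y, ¬ D.Adj (i, x) (i + 1, y))
    (hcut' : ∀ x y, ¬ D.Adj (i', x) (i' + 1, y)) : ¬ D.Connected := by
  set e : ℕ := (i' - (i + 1)).val with he
  set χ : Fin s → Prop := fun j => (j - (i + 1)).val ≤ e with hχ
  have step : ∀ p q : Fin s × Fin (2*k+1), D.Adj p q → q.1 = p.1 + 1 → (χ p.1 ↔ χ q.1) := by
    rintro ⟨pi, px⟩ ⟨qi, qx⟩ hadj hq
    simp only at hq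
    subst hq
    have hpi : pi ≠ i := fun h => hcut px qx (h ▸ hadj)
    have hpi' : pi ≠ i' := fun h => hcut' px qx (h ▸ hadj)
    set w : Fin s := pi - (i + 1) with hw
    have hw1 : pi + 1 - (i + 1) = w + 1 := by rw [hw]; abel
    have hwne : w + 1 ≠ 0 := by
      intro h
      have h2 : pi + 1 - (i + 1) = 0 := by rw [hw1, h]
      have h3 : pi + 1 = i + 1 := sub_eq_zero.mp h2
      exact hpi (add_right_cancel h3)
    have hwv : (pi + 1 - (i + 1)).val = w.val + 1 := by
      rw [hw1]; exact fin_add_one_val_of_ne hwne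
    have hwe : w.val ≠ e := by
      intro h
      apply hpi'
      have h2 : w = i' - (i + 1) := Fin.ext (by rw [h, he])
      have h3 : pi - (i + 1) - (i' - (i + 1)) = 0 := by rw [← hw, h2, sub_self]
      have h4 : pi - i' = 0 := by rw [← h3]; abel
      exact sub_eq_zero.mp h4
    show χ pi ↔ χ (pi + 1)
    rw [hχ]
    simp only [hwv, ← hw]
    omega
  have inv : ∀ {p q : Fin s × Fin (2*k+1)}, D.Walk p q → (χ p.1 ↔ χ q.1) := by
    intro p q wlk
    induction wlk with
    | nil => exact Iff.rfl
    | cons hadj wtail ih =>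
      rename_i u v r
      refine Iff.trans ?_ ih
      rcases adj_structure hs hD hadj with h1 | h1 | h1
      · rw [h1]
      · exact step u v hadj h1
      · exact (step v u hadj.symm h1).symm
  intro hcon
  obtain ⟨wlk⟩ := hcon.preconnected (i + 1, (⟨0, by omega⟩ : Fin (2*k+1)))
    (i' + 1, (⟨0, by omega⟩ : Fin (2*k+1)))
  have hiff : χ (i + 1) ↔ χ (i' + 1) := inv wlk
  rw [hχ] at hiff
  simp only at hiff
  have h1 : ((i + 1 : Fin s) - (i + 1)).val = 0 := by rw [sub_self]; simp
  have hine : (i' - (i + 1)) + 1 ≠ 0 := by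
    intro h
    have h2 : i' - (i + 1) + 1 = i' - i := by abel
    rw [h2] at h
    exact hii (sub_eq_zero.mp h).symm
  have h2 : ((i' + 1 : Fin s) - (i + 1)).val = e + 1 := by
    have e1 : (i' + 1 : Fin s) - (i + 1) = (i' - (i + 1)) + 1 := by abel
    rw [e1, fin_add_one_val_of_ne hine, he]
  rw [h1, h2] at hiff
  omega

end Machinery


section Codewords

variable {k s : ℕ} [NeZero s]

/-- The codeword graph associated to a subset `S` of `Fin k`. -/
def gr (a b : Fin s → Fin k → Fin (2 * k + 1)) (S : Finset (Fin k)) :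
    SimpleGraph (Fin s × Fin (2*k+1)) :=
  SimpleGraph.fromRel (fun p q =>
    (p.1 = q.1 ∧ ∃ j ∈ S, tAdj j p.2 q.2) ∨
    ((q.1 : ℕ) = ((p.1 : ℕ) + 1) % s ∧ ∃ m ∈ S, p.2 = a p.1 m ∧ q.2 = b p.1 m))

variable {a b : Fin s → Fin k → Fin (2 * k + 1)}

lemma gr_le (S : Finset (Fin k)) : gr a b S ≤ cliqueRing s k a b := by
  intro p q h
  rw [gr, fromRel_adj] at h
  rw [cliqueRing, fromRel_adj]
  obtain ⟨hne, h⟩ := h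
  refine ⟨hne, ?_⟩
  rcases h with (⟨h1, j, -, hj⟩ | ⟨h1, m, -, hm⟩) | (⟨h1, j, -, hj⟩ | ⟨h1, m, -, hm⟩)
  · exact Or.inl (Or.inl ⟨h1, tAdj_ne hj⟩)
  · exact Or.inl (Or.inr ⟨h1, m, hm⟩)
  · exact Or.inr (Or.inl ⟨h1, tAdj_ne hj⟩)
  · exact Or.inr (Or.inr ⟨h1, m, hm⟩)

lemma gr_adj_same (hs : 2 ≤ s) {S : Finset (Fin k)} {i : Fin s} {x y : Fin (2*k+1)} :
    (gr a b S).Adj (i, x) (i, y) ↔ ∃ j ∈ S, tAdj j x y := by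
  rw [gr, fromRel_adj]
  constructor
  · rintro ⟨hne, h⟩
    have hmatch : ¬ ((i : ℕ) = ((i : ℕ) + 1) % s) := by
      intro h1
      exact next_ne hs i (Fin.ext (by rw [val_add_one hs, ← h1]))
    rcases h with (⟨-, hj⟩ | ⟨h1, -⟩) | (⟨-, hj⟩ | ⟨h1, -⟩)
    · exact hj
    · exact absurd h1 hmatch
    · obtain ⟨j, hjS, hj⟩ := hj
      exact ⟨j, hjS, tAdj_symm hj⟩
    · exact absurd h1 hmatch
  · rintro ⟨j, hjS, hj⟩
    refine ⟨?_, Or.inl (Or.inl ⟨rfl, j, hjS, hj⟩)⟩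
    intro h
    exact tAdj_ne hj (congrArg Prod.snd h)

lemma gr_adj_next (hs : 4 ≤ s) {S : Finset (Fin k)} {i : Fin s} {x y : Fin (2*k+1)} :
    (gr a b S).Adj (i, x) (i + 1, y) ↔ ∃ m ∈ S, x = a i m ∧ y = b i m := by
  rw [gr, fromRel_adj]
  constructor
  · rintro ⟨hne, h⟩
    have hii : (i : Fin s) ≠ i + 1 := fun h' => next_ne (by omega) i h'.symm
    rcases h with (⟨h1, -⟩ | ⟨-, hm⟩) | (⟨h1, -⟩ | ⟨h1, -⟩)
    · exact absurd h1 hii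
    · exact hm
    · exact absurd h1.symm hii
    · exfalso
      have : (i : Fin s) = i + 1 + 1 := Fin.ext (by rw [val_add_one (by omega), ← h1])
      exact two_step_ne hs i this.symm
  · rintro ⟨m, hmS, rfl, rfl⟩
    refine ⟨?_, Or.inl (Or.inr ⟨(val_add_one (by omega) i).symm ▸ rfl, m, hmS, rfl, rfl⟩)⟩
    intro h
    exact next_ne (by omega : 2 ≤ s) i (congrArg Prod.fst h).symm

lemma sd_adj {V : Type*} (G₁ G₂ : SimpleGraph V) (p q : V) :
    (symmDiff G₁ G₂).Adj p q ↔ (G₁.Adj p q ∧ ¬ G₂.Adj p q) ∨ (G₂.Adj p q ∧ ¬ G₁.Adj p q) := by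
  rw [symmDiff_def]
  simp [sdiff_adj]

lemma sd_gr_le (S T : Finset (Fin k)) : symmDiff (gr a b S) (gr a b T) ≤ cliqueRing s k a b := by
  intro p q h
  rw [sd_adj] at h
  rcases h with ⟨h, -⟩ | ⟨h, -⟩
  exacts [gr_le S h, gr_le T h]

lemma sd_gr_adj_same (hs : 2 ≤ s) {S T : Finset (Fin k)} {i : Fin s} {x y : Fin (2*k+1)} :
    (symmDiff (gr a b S) (gr a b T)).Adj (i, x) (i, y) ↔ ∃ j ∈ symmDiff S T, tAdj j x y := by
  rw [sd_adj, gr_adj_same hs, gr_adj_same hs]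
  constructor
  · rintro (⟨⟨j, hjS, hj⟩, hnT⟩ | ⟨⟨j, hjT, hj⟩, hnS⟩)
    · refine ⟨j, Finset.mem_symmDiff.mpr (Or.inl ⟨hjS, fun hjT => hnT ⟨j, hjT, hj⟩⟩), hj⟩
    · refine ⟨j, Finset.mem_symmDiff.mpr (Or.inr ⟨hjT, fun hjS => hnS ⟨j, hjS, hj⟩⟩), hj⟩
  · rintro ⟨j, hjST, hj⟩
    rcases Finset.mem_symmDiff.mp hjST with ⟨hjS, hjnT⟩ | ⟨hjT, hjnS⟩
    · refine Or.inl ⟨⟨j, hjS, hj⟩, ?_⟩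
      rintro ⟨j', hj'T, hj'⟩
      exact hjnT ((tAdj_unique hj hj') ▸ hj'T)
    · refine Or.inr ⟨⟨j, hjT, hj⟩, ?_⟩
      rintro ⟨j', hj'S, hj'⟩
      exact hjnS ((tAdj_unique hj hj') ▸ hj'S)

lemma sd_gr_adj_next (hs : 4 ≤ s) (ha : ∀ i, Function.Injective (a i))
    {S T : Finset (Fin k)} {i : Fin s} {x y : Fin (2*k+1)} :
    (symmDiff (gr a b S) (gr a b T)).Adj (i, x) (i + 1, y) ↔
      ∃ m ∈ symmDiff S T, x = a i m ∧ y = b i m := by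
  rw [sd_adj, gr_adj_next hs, gr_adj_next hs]
  constructor
  · rintro (⟨⟨m, hmS, hm⟩, hnT⟩ | ⟨⟨m, hmT, hm⟩, hnS⟩)
    · exact ⟨m, Finset.mem_symmDiff.mpr (Or.inl ⟨hmS, fun hmT => hnT ⟨m, hmT, hm⟩⟩), hm⟩
    · exact ⟨m, Finset.mem_symmDiff.mpr (Or.inr ⟨hmT, fun hmS => hnS ⟨m, hmS, hm⟩⟩), hm⟩
  · rintro ⟨m, hmST, hm⟩
    rcases Finset.mem_symmDiff.mp hmST with ⟨hmS, hmnT⟩ | ⟨hmT, hmnS⟩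
    · refine Or.inl ⟨⟨m, hmS, hm⟩, ?_⟩
      rintro ⟨m', hm'T, hm'⟩
      exact hmnT ((ha i (hm.1.symm.trans hm'.1) : m = m') ▸ hm'T)
    · refine Or.inr ⟨⟨m, hmT, hm⟩, ?_⟩
      rintro ⟨m', hm'S, hm'⟩
      exact hmnS ((ha i (hm.1.symm.trans hm'.1) : m = m') ▸ hm'S)

/-- The symmetric difference of two distinct codewords is connected. -/
lemma sd_gr_connected (hk : 1 ≤ k) (hs : 4 ≤ s) (ha : ∀ i, Function.Injective (a i))
    {S T : Finset (Fin k)} (hST : S ≠ T) :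
    (symmDiff (gr a b S) (gr a b T)).Connected := by
  have hne : (symmDiff S T).Nonempty := by
    rw [Finset.nonempty_iff_ne_empty]
    simpa using hST
  obtain ⟨j₀, hj₀⟩ := hne
  refine ring_connected hk (show 2 ≤ s by omega) _ 0 ?_ ?_
  · intro i x y
    exact tAdj_reach j₀ _ (fun u => (i, u)) (fun u v huv =>
      (sd_gr_adj_same (show 2 ≤ s by omega)).mpr ⟨j₀, hj₀, huv⟩) x y
  · intro i _
    exact ⟨a i j₀, b i j₀, (sd_gr_adj_next hs ha).mpr ⟨j₀, hj₀, rfl, rfl⟩⟩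

end Codewords


section MCode

open scoped Classical

variable {k s : ℕ} [NeZero s] {a b : Fin s → Fin k → Fin (2 * k + 1)}

lemma gr_injective (hs : 4 ≤ s) (ha : ∀ i, Function.Injective (a i)) :
    Function.Injective (gr a b (k := k)) := by
  intro S T h
  by_contra hST
  have hne : (symmDiff S T).Nonempty := by
    rw [Finset.nonempty_iff_ne_empty]
    simpa using hST
  obtain ⟨j₀, hj₀⟩ := hne
  have hadj := (sd_gr_adj_next (a := a) (b := b) hs ha (i := 0)).mpr ⟨j₀, hj₀, rfl, rfl⟩
  rw [h, symmDiff_self] at hadj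
  simpa using hadj

lemma code_isConnCode (hk : 1 ≤ k) (hs : 4 ≤ s) (ha : ∀ i, Function.Injective (a i)) :
    IsConnCode (cliqueRing s k a b) (Set.range (gr a b)) := by
  constructor
  · rintro G ⟨S, rfl⟩
    exact gr_le S
  · rintro G₁ ⟨S, rfl⟩ G₂ ⟨T, rfl⟩ hne
    exact sd_gr_connected hk hs ha (fun h => hne (by rw [h]))

lemma mCode_ge (hk : 1 ≤ k) (hs : 4 ≤ s) (ha : ∀ i, Function.Injective (a i)) :
    2 ^ k ∈ {n : ℕ | ∃ 𝒢 : Set (SimpleGraph (Fin s × Fin (2*k+1))),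
      IsConnCode (cliqueRing s k a b) 𝒢 ∧ 𝒢.ncard = n} := by
  refine ⟨Set.range (gr a b), code_isConnCode hk hs ha, ?_⟩
  rw [← Set.image_univ, Set.ncard_image_of_injective _ (gr_injective hs ha), Set.ncard_univ,
    Nat.card_eq_fintype_card, Fintype.card_finset, Fintype.card_fin]

/-- The signature of a codeword at position `i`: which matching edges of `M i` it uses. -/
noncomputable def sig (a b : Fin s → Fin k → Fin (2 * k + 1)) (i : Fin s)
    (G : SimpleGraph (Fin s × Fin (2*k+1))) : Finset (Fin k) :=
  Finset.univ.filter (fun m => G.Adj (i, a i m) (i + 1, b i m))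

/-- Two distinct codewords of a connectivity code can agree at most at one position. -/
lemma key_agree (hs : 4 ≤ s) {𝒢 : Set (SimpleGraph (Fin s × Fin (2*k+1)))}
    (hcode : IsConnCode (cliqueRing s k a b) 𝒢)
    {G₁ G₂ : SimpleGraph (Fin s × Fin (2*k+1))} (h₁ : G₁ ∈ 𝒢) (h₂ : G₂ ∈ 𝒢) (hne : G₁ ≠ G₂)
    {i i' : Fin s} (hii : i ≠ i') (hsig : sig a b i G₁ = sig a b i G₂)
    (hsig' : sig a b i' G₁ = sig a b i' G₂) : False := by
  obtain ⟨hle, hconn⟩ := hcode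
  have hDle : symmDiff G₁ G₂ ≤ cliqueRing s k a b := by
    rw [symmDiff_def]
    exact sup_le (sdiff_le.trans (hle G₁ h₁)) (sdiff_le.trans (hle G₂ h₂))
  have hcut : ∀ (i : Fin s), sig a b i G₁ = sig a b i G₂ →
      ∀ x y, ¬ (symmDiff G₁ G₂).Adj (i, x) (i + 1, y) := by
    intro i hsg x y hadj
    obtain ⟨m, rfl, rfl⟩ := (adj_next hs).mp (hDle hadj)
    have hiff : G₁.Adj (i, a i m) (i + 1, b i m) ↔ G₂.Adj (i, a i m) (i + 1, b i m) := by
      constructor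
      · intro h
        have : m ∈ sig a b i G₁ := by simp [sig, h]
        rw [hsg] at this
        simpa [sig] using this
      · intro h
        have : m ∈ sig a b i G₂ := by simp [sig, h]
        rw [← hsg] at this
        simpa [sig] using this
    rw [sd_adj] at hadj
    tauto
  exact split_disconnected hs hDle hii (hcut i hsig) (hcut i' hsig')
    (hconn G₁ h₁ G₂ h₂ hne)

/-- Any connectivity code for the clique ring has at most `2 ^ k` elements. -/
lemma code_card_le (hk : 1 ≤ k) (hs : 2 ^ (k - 1) * (2 ^ k + 1) < s) (hs4 : 4 ≤ s)
    {𝒢 : Set (SimpleGraph (Fin s × Fin (2*k+1)))}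
    (hcode : IsConnCode (cliqueRing s k a b) 𝒢) : 𝒢.ncard ≤ 2 ^ k := by
  by_contra hbig
  push_neg at hbig
  have hfin : 𝒢.Finite := by
    by_contra h'
    rw [Set.Infinite.ncard h'] at hbig
    exact absurd hbig (Nat.not_lt_zero _)
  have hcard : 2 ^ k + 1 ≤ hfin.toFinset.card := by
    rw [← Set.ncard_eq_toFinset_card 𝒢 hfin]
    omega
  obtain ⟨𝒢', hsub, hcard'⟩ := Finset.exists_subset_card_eq hcard
  have hmem : ∀ G ∈ 𝒢', G ∈ 𝒢 := by
    intro G hG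
    have := hsub hG
    rwa [Set.Finite.mem_toFinset] at this
  -- at each position, two codewords agree
  have hpair : ∀ i : Fin s, ∃ p : SimpleGraph (Fin s × Fin (2*k+1)) ×
      SimpleGraph (Fin s × Fin (2*k+1)),
      p.1 ∈ 𝒢' ∧ p.2 ∈ 𝒢' ∧ p.1 ≠ p.2 ∧ sig a b i p.1 = sig a b i p.2 := by
    intro i
    have hlt : (Finset.univ : Finset (Finset (Fin k))).card < 𝒢'.card := by
      rw [hcard', Finset.card_univ, Fintype.card_finset, Fintype.card_fin]
      omega
    obtain ⟨G₁, hG₁, G₂, hG₂, hGne, hGeq⟩ :=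
      Finset.exists_ne_map_eq_of_card_lt_of_maps_to hlt
        (fun G _ => Finset.mem_univ (sig a b i G))
    exact ⟨(G₁, G₂), hG₁, hG₂, hGne, hGeq⟩
  choose f hf1 hf2 hf3 hf4 using hpair
  set g : Fin s → Finset (SimpleGraph (Fin s × Fin (2*k+1))) :=
    fun i => {(f i).1, (f i).2} with hg
  have hginj : Function.Injective g := by
    intro i i' hgii
    by_contra hii
    -- the two pairs coincide as sets, so one pair agrees at both i and i'
    have hgii' : ({(f i).1, (f i).2} : Finset _) = {(f i').1, (f i').2} := hgii
    have h1 : (f i).1 ∈ ({(f i').1, (f i').2} : Finset _) := by rw [← hgii']; simp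
    have h2 : (f i).2 ∈ ({(f i').1, (f i').2} : Finset _) := by rw [← hgii']; simp
    simp only [Finset.mem_insert, Finset.mem_singleton] at h1 h2
    have hagree' : sig a b i' (f i).1 = sig a b i' (f i).2 := by
      rcases h1 with h1 | h1 <;> rcases h2 with h2 | h2
      · exact absurd (h1.trans h2.symm) (hf3 i)
      · rw [h1, h2]; exact hf4 i'
      · rw [h1, h2]; exact (hf4 i').symm
      · exact absurd (h1.trans h2.symm) (hf3 i)
    exact key_agree hs4 hcode (hmem _ (hf1 i)) (hmem _ (hf2 i)) (hf3 i) hii (hf4 i) hagree'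
  have hmaps : ∀ i : Fin s, g i ∈ 𝒢'.powersetCard 2 := by
    intro i
    rw [Finset.mem_powersetCard]
    constructor
    · intro G hG
      simp only [hg, Finset.mem_insert, Finset.mem_singleton] at hG
      rcases hG with rfl | rfl
      exacts [hf1 i, hf2 i]
    · rw [hg]
      rw [Finset.card_insert_of_notMem (by simpa using hf3 i), Finset.card_singleton]
  have hsle : s ≤ (𝒢'.powersetCard 2).card := by
    have := Finset.card_le_card_of_injOn (s := (Finset.univ : Finset (Fin s)))
      (t := 𝒢'.powersetCard 2) g (fun i _ => hmaps i) (Function.Injective.injOn hginj)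
    simpa using this
  rw [Finset.card_powersetCard, hcard', Nat.choose_two_right] at hsle
  have h2k : 2 ^ k = 2 * 2 ^ (k - 1) := by
    conv_lhs => rw [show k = (k - 1) + 1 by omega]
    rw [pow_succ]
    ring
  have hprod : (2 ^ k + 1) * (2 ^ k + 1 - 1) = 2 * (2 ^ (k - 1) * (2 ^ k + 1)) := by
    rw [Nat.add_sub_cancel, h2k]
    ring
  rw [hprod, Nat.mul_div_cancel_left _ (by norm_num : (0:ℕ) < 2)] at hsle
  omega

lemma mCode_eq (hk : 1 ≤ k) (hs : 2 ^ (k - 1) * (2 ^ k + 1) < s) (hs4 : 4 ≤ s)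
    (ha : ∀ i, Function.Injective (a i)) :
    mCode (cliqueRing s k a b) = 2 ^ k := by
  rw [mCode]
  apply le_antisymm
  · apply csSup_le ⟨2 ^ k, mCode_ge hk hs4 ha⟩
    rintro n ⟨𝒢, hcode, rfl⟩
    exact code_card_le hk hs hs4 hcode
  · apply le_csSup ?_ (mCode_ge hk hs4 ha)
    refine ⟨2 ^ k, ?_⟩
    rintro n ⟨𝒢, hcode, rfl⟩
    exact code_card_le hk hs hs4 hcode

end MCode


section EdgeConn

open scoped Classical

variable {k s : ℕ} [NeZero s] {a b : Fin s → Fin k → Fin (2 * k + 1)}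

/-- After deleting fewer than `2k` edges, each clique remains internally connected. -/
lemma clique_conn_del (hk : 1 ≤ k) (hs : 4 ≤ s) {F : Set (Sym2 (Fin s × Fin (2*k+1)))}
    (hfin : F.Finite) (hcard : F.ncard < 2 * k) (i : Fin s) (x y : Fin (2*k+1)) :
    ((cliqueRing s k a b).deleteEdges F).Reachable (i, x) (i, y) := by
  by_cases hxy : x = y
  · rw [hxy]
  have hroute : ((cliqueRing s k a b).deleteEdges F).Adj (i, x) (i, y) ∨
      ∃ z : Fin (2*k+1), z ≠ x ∧ z ≠ y ∧
        ((cliqueRing s k a b).deleteEdges F).Adj (i, x) (i, z) ∧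
        ((cliqueRing s k a b).deleteEdges F).Adj (i, z) (i, y) := by
    by_contra hno
    push_neg at hno
    obtain ⟨hnd, hnz⟩ := hno
    have hadj' : ∀ u v : Fin (2*k+1), u ≠ v →
        ¬ ((cliqueRing s k a b).deleteEdges F).Adj (i, u) (i, v) →
        s((i, u), (i, v)) ∈ F := by
      intro u v huv hn
      by_contra hFn
      exact hn (by rw [deleteEdges_adj]; exact ⟨(adj_same (by omega)).mpr huv, hFn⟩)
    have hdir : s((i, x), (i, y)) ∈ F := hadj' x y hxy hnd
    set Z : Finset (Fin (2*k+1)) := ({x, y} : Finset (Fin (2*k+1)))ᶜ with hZ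
    have hZmem : ∀ z ∈ Z, z ≠ x ∧ z ≠ y := by
      intro z hz
      rw [hZ, Finset.mem_compl, Finset.mem_insert, Finset.mem_singleton] at hz
      push_neg at hz
      exact hz
    set κ : Fin (2*k+1) → Sym2 (Fin s × Fin (2*k+1)) :=
      fun z => if s((i, x), (i, z)) ∈ F then s((i, x), (i, z)) else s((i, z), (i, y)) with hκ
    have hκF : ∀ z ∈ Z, κ z ∈ F := by
      intro z hz
      obtain ⟨hzx, hzy⟩ := hZmem z hz
      simp only [hκ]
      by_cases hc : s((i, x), (i, z)) ∈ F
      · rw [if_pos hc]; exact hc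
      · rw [if_neg hc]
        by_cases hxz : ((cliqueRing s k a b).deleteEdges F).Adj (i, x) (i, z)
        · exact hadj' z y hzy (hnz z hzx hzy hxz)
        · exact absurd (hadj' x z (Ne.symm hzx) hxz) hc
    have hκinj : Set.InjOn κ Z := by
      intro z hz z' hz' heq
      obtain ⟨hzx, hzy⟩ := hZmem z (by simpa using hz)
      obtain ⟨hz'x, hz'y⟩ := hZmem z' (by simpa using hz')
      simp only [hκ] at heq
      by_cases h1 : s((i, x), (i, z)) ∈ F <;> by_cases h2 : s((i, x), (i, z')) ∈ F <;>
        simp only [h1, h2, if_true, if_false] at heq <;>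
        simp only [Sym2.eq_iff, Prod.mk.injEq] at heq <;>
        tauto
    have hdirnot : s((i, x), (i, y)) ∉ Z.image κ := by
      intro hmem
      obtain ⟨z, hz, hzeq⟩ := Finset.mem_image.mp hmem
      obtain ⟨hzx, hzy⟩ := hZmem z hz
      simp only [hκ] at hzeq
      by_cases h1 : s((i, x), (i, z)) ∈ F <;>
        simp only [h1, if_true, if_false] at hzeq <;>
        simp only [Sym2.eq_iff, Prod.mk.injEq] at hzeq <;>
        tauto
    set T : Finset (Sym2 (Fin s × Fin (2*k+1))) := insert (s((i, x), (i, y))) (Z.image κ)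
      with hT
    have hTsub : (T : Set (Sym2 (Fin s × Fin (2*k+1)))) ⊆ F := by
      intro e he
      simp only [hT, Finset.coe_insert, Set.mem_insert_iff, Finset.coe_image,
        Set.mem_image] at he
      rcases he with rfl | ⟨z, hz, rfl⟩
      · exact hdir
      · exact hκF z (by simpa using hz)
    have hTcard : T.card = 2 * k := by
      rw [hT, Finset.card_insert_of_notMem hdirnot,
        Finset.card_image_of_injOn hκinj]
      have : Z.card = 2 * k - 1 := by
        rw [hZ, Finset.card_compl]
        rw [Finset.card_insert_of_notMem (by simpa using hxy), Finset.card_singleton]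
        simp only [Fintype.card_fin]
        omega
      omega
    have hle2 := Set.ncard_le_ncard hTsub hfin
    rw [Set.ncard_coe_finset, hTcard] at hle2
    omega
  rcases hroute with h | ⟨z, -, -, h1, h2⟩
  · exact h.reachable
  · exact h1.reachable.trans h2.reachable

/-- Two full matchings in the deleted set force at least `2k` deleted edges. -/
lemma full_matchings_card (hs : 4 ≤ s) (ha : ∀ i, Function.Injective (a i))
    {F : Set (Sym2 (Fin s × Fin (2*k+1)))} (hfin : F.Finite) {i i' : Fin s} (hii : i ≠ i')
    (h1 : ∀ m, me a b i m ∈ F) (h2 : ∀ m, me a b i' m ∈ F) : 2 * k ≤ F.ncard := by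
  set U : Finset (Sym2 (Fin s × Fin (2*k+1))) :=
    (Finset.univ.image (me a b i)) ∪ (Finset.univ.image (me a b i')) with hU
  have hUsub : (U : Set (Sym2 (Fin s × Fin (2*k+1)))) ⊆ F := by
    intro e he
    simp only [hU, Finset.coe_union, Set.mem_union, Finset.coe_image, Set.mem_image] at he
    rcases he with ⟨m, -, rfl⟩ | ⟨m, -, rfl⟩
    exacts [h1 m, h2 m]
  have hinj : ∀ j : Fin s, Set.InjOn (me a b j) (Finset.univ : Finset (Fin k)) :=
    fun j m _ m' _ h => me_inj_m hs ha h
  have hdisj : Disjoint (Finset.univ.image (me a b i)) (Finset.univ.image (me a b i')) := by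
    rw [Finset.disjoint_left]
    intro e he he'
    obtain ⟨m, -, rfl⟩ := Finset.mem_image.mp he
    obtain ⟨m', -, hm'⟩ := Finset.mem_image.mp he'
    exact me_ne_of_ne hs (fun h => hii h.symm) m' m hm'
  have hUcard : U.card = 2 * k := by
    rw [hU, Finset.card_union_of_disjoint hdisj,
      Finset.card_image_of_injOn (hinj i), Finset.card_image_of_injOn (hinj i')]
    simp only [Finset.card_univ, Fintype.card_fin]
    omega
  have hle2 := Set.ncard_le_ncard hUsub hfin
  rwa [Set.ncard_coe_finset, hUcard] at hle2

lemma edgeConn_lower (hk : 1 ≤ k) (hs : 4 ≤ s) (ha : ∀ i, Function.Injective (a i))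
    {F : Set (Sym2 (Fin s × Fin (2*k+1)))} (hF : F ⊆ (cliqueRing s k a b).edgeSet)
    (hcard : F.ncard < 2 * k) : ((cliqueRing s k a b).deleteEdges F).Connected := by
  have hfin : F.Finite := Set.Finite.subset (Set.toFinite _) hF
  have hlink : ∀ i₀ : Fin s, (∀ i : Fin s, i ≠ i₀ → ∃ m, me a b i m ∉ F) →
      ((cliqueRing s k a b).deleteEdges F).Connected := by
    intro i₀ hl
    refine ring_connected hk (by omega) _ i₀ (fun i x y => clique_conn_del hk hs hfin hcard i x y) ?_
    intro i hi
    obtain ⟨m, hm⟩ := hl i hi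
    refine ⟨a i m, b i m, ?_⟩
    rw [deleteEdges_adj]
    exact ⟨(adj_next hs).mpr ⟨m, rfl, rfl⟩, hm⟩
  by_cases hone : ∃ i₁ : Fin s, ∀ m, me a b i₁ m ∈ F
  · obtain ⟨i₁, hi₁⟩ := hone
    apply hlink i₁
    intro i hi
    by_contra hall
    push_neg at hall
    exact absurd (full_matchings_card hs ha hfin hi hall hi₁) (by omega)
  · push_neg at hone
    exact hlink 0 (fun i _ => hone i)

lemma edgeConn_upper (hk : 1 ≤ k) (hs : 4 ≤ s) (ha : ∀ i, Function.Injective (a i)) :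
    ∃ F : Set (Sym2 (Fin s × Fin (2*k+1))), F ⊆ (cliqueRing s k a b).edgeSet ∧
      F.ncard = 2 * k ∧ ¬((cliqueRing s k a b).deleteEdges F).Connected := by
  set iₗ : Fin s := ⟨s - 1, by omega⟩ with hiₗ
  have hil0 : iₗ ≠ 0 := by
    rw [hiₗ]
    intro h
    have := congrArg Fin.val h
    simp at this
    omega
  set U : Finset (Sym2 (Fin s × Fin (2*k+1))) :=
    (Finset.univ.image (me a b iₗ)) ∪ (Finset.univ.image (me a b 0)) with hU
  refine ⟨(U : Set (Sym2 (Fin s × Fin (2*k+1)))), ?_, ?_, ?_⟩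
  · intro e he
    simp only [hU, Finset.coe_union, Set.mem_union, Finset.coe_image, Set.mem_image] at he
    rcases he with ⟨m, -, rfl⟩ | ⟨m, -, rfl⟩
    exacts [me_mem_edgeSet hs _ m, me_mem_edgeSet hs _ m]
  · rw [Set.ncard_coe_finset]
    have hdisj : Disjoint (Finset.univ.image (me a b iₗ)) (Finset.univ.image (me a b 0)) := by
      rw [Finset.disjoint_left]
      intro e he he'
      obtain ⟨m, -, rfl⟩ := Finset.mem_image.mp he
      obtain ⟨m', -, hm'⟩ := Finset.mem_image.mp he'
      exact me_ne_of_ne hs (fun h => hil0 h.symm) m' m hm'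
    rw [hU, Finset.card_union_of_disjoint hdisj,
      Finset.card_image_of_injOn (fun m _ m' _ h => me_inj_m hs ha h),
      Finset.card_image_of_injOn (fun m _ m' _ h => me_inj_m hs ha h)]
    simp only [Finset.card_univ, Fintype.card_fin]
    omega
  · have hcut : ∀ (j : Fin s) (hj : j = iₗ ∨ j = 0) (x y : Fin (2*k+1)),
        ¬ ((cliqueRing s k a b).deleteEdges (U : Set _)).Adj (j, x) (j + 1, y) := by
      intro j hj x y hadj
      rw [deleteEdges_adj] at hadj
      obtain ⟨hadj, hmem⟩ := hadj
      obtain ⟨m, rfl, rfl⟩ := (adj_next hs).mp hadj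
      apply hmem
      simp only [hU, Finset.coe_union, Set.mem_union, Finset.coe_image, Set.mem_image]
      rcases hj with rfl | rfl
      · exact Or.inl ⟨m, by simp, rfl⟩
      · exact Or.inr ⟨m, by simp, rfl⟩
    exact split_disconnected hs (deleteEdges_le _) hil0 (hcut iₗ (Or.inl rfl))
      (hcut 0 (Or.inr rfl))

lemma edgeConn_eq (hk : 1 ≤ k) (hs : 4 ≤ s) (ha : ∀ i, Function.Injective (a i)) :
    edgeConn (cliqueRing s k a b) = 2 * k := by
  rw [edgeConn]
  apply le_antisymm
  · apply Nat.sInf_le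
    obtain ⟨F, h1, h2, h3⟩ := edgeConn_upper hk hs ha
    exact ⟨F, h1, h2, h3⟩
  · apply le_csInf
    · obtain ⟨F, h1, h2, h3⟩ := edgeConn_upper hk hs ha
      exact ⟨2 * k, F, h1, h2, h3⟩
    · rintro n ⟨F, h1, rfl, h3⟩
      by_contra hlt
      push_neg at hlt
      exact h3 (edgeConn_lower hk hs ha h1 hlt)

end EdgeConn

end Stmt12

/-- For `k ≥ 1` and `s > 2^(k-1) (2^k + 1)`, the graph `H(s, k)` has edge-connectivity
exactly `2k` and satisfies `m(H(s,k)) = 2 ^ k`. -/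
theorem stmt12 (k s : ℕ) (hk : 1 ≤ k) (hs : 2 ^ (k - 1) * (2 ^ k + 1) < s)
    (a b : Fin s → Fin k → Fin (2 * k + 1))
    (ha : ∀ i, Function.Injective (a i)) (hb : ∀ i, Function.Injective (b i)) :
    edgeConn (cliqueRing s k a b) = 2 * k ∧ mCode (cliqueRing s k a b) = 2 ^ k := by
  have h1 : 1 ≤ 2 ^ (k - 1) := Nat.one_le_two_pow
  have h2 : 2 ≤ 2 ^ k := by
    calc 2 = 2 ^ 1 := (pow_one 2).symm
    _ ≤ 2 ^ k := Nat.pow_le_pow_right (by norm_num) hk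
  have hs4 : 4 ≤ s := by nlinarith
  haveI : NeZero s := ⟨by omega⟩
  exact ⟨Stmt12.edgeConn_eq hk hs4 ha, Stmt12.mCode_eq hk hs hs4 ha⟩
end

section
/- For the triangle K_3 (the complete graph on 3 vertices), m(K_3) = 4, while for every cycle C_n on n > 3 vertices, m(C_n) = 2. -/
open SimpleGraph

lemma connected_sdiff_of_not_isBridge {V : Type*} {G : SimpleGraph V} (hc : G.Connected)
    {u v : V} (huv : G.Adj u v) (hb : ¬ G.IsBridge s(u,v)) :
    (G \ fromEdgeSet {s(u,v)}).Connected := by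
  rw [isBridge_iff] at hb
  push_neg at hb
  have hr : (G \ fromEdgeSet {s(u,v)}).Reachable u v := hb
  have hne : Nonempty V := hc.nonempty
  refine ⟨fun x y => ?_⟩
  obtain ⟨w⟩ := hc.preconnected x y
  induction w with
  | nil => exact Reachable.refl _
  | @cons a b c ha p ih =>
    refine Reachable.trans ?_ ih
    by_cases he : s(a,b) = s(u,v)
    · rw [Sym2.eq_iff] at he
      rcases he with ⟨rfl, rfl⟩ | ⟨rfl, rfl⟩
      · exact hr
      · exact hr.symm
    · refine Adj.reachable ?_
      rw [sdiff_adj, fromEdgeSet_adj]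
      simp only [Set.mem_singleton_iff]
      exact ⟨ha, fun h => he h.1⟩

lemma connected_card_le {V : Type*} [Fintype V] :
    ∀ (m : ℕ) (G : SimpleGraph V), G.edgeSet.ncard = m → G.Connected →
      Fintype.card V ≤ m + 1 := by
  intro m
  induction m using Nat.strong_induction_on with
  | _ m ih =>
    intro G hm hc
    by_cases hac : G.IsAcyclic
    · have ht : G.IsTree := ⟨hc, hac⟩
      classical
      haveI : Fintype G.edgeSet := (Set.toFinite _).fintype
      have := ht.card_edgeFinset
      rw [← this]
      have h2 : G.edgeFinset.card = m := by
        rw [← hm, Set.ncard_eq_toFinset_card']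
        congr 1
      omega
    · rw [isAcyclic_iff_forall_edge_isBridge] at hac
      push_neg at hac
      obtain ⟨e, he, hbr⟩ := hac
      induction e with
      | _ u v =>
        have hconn := connected_sdiff_of_not_isBridge hc he hbr
        have hedge : (G \ fromEdgeSet {s(u,v)}).edgeSet = G.edgeSet \ {s(u,v)} := by
          rw [edgeSet_sdiff, edgeSet_fromEdgeSet, edgeSet_sdiff_sdiff_isDiag]
        have hcard : (G \ fromEdgeSet {s(u,v)}).edgeSet.ncard = m - 1 := by
          rw [hedge, Set.ncard_diff_singleton_of_mem he, hm]
        have hm1 : 1 ≤ m := by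
          rw [← hm]
          exact (Set.ncard_pos (Set.toFinite _)).mpr ⟨_, he⟩
        have := ih (m-1) (by omega) _ hcard hconn
        omega

lemma edgeSet_symmDiff' {V : Type*} (G₁ G₂ : SimpleGraph V) :
    (symmDiff G₁ G₂).edgeSet = symmDiff G₁.edgeSet G₂.edgeSet := by
  rw [symmDiff_def, symmDiff_def, edgeSet_sup, edgeSet_sdiff, edgeSet_sdiff]
  rfl

lemma not_connected_of_isolated {V : Type*} {G : SimpleGraph V} {v w : V} (hvw : v ≠ w)
    (h : ∀ x, ¬ G.Adj v x) : ¬ G.Connected := by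
  intro hc
  obtain ⟨p⟩ := hc.preconnected v w
  cases p with
  | nil => exact hvw rfl
  | cons ha _ => exact h _ ha

lemma conn3 {G : SimpleGraph (Fin 3)} (a b c : Fin 3) (hab : G.Adj a b) (hbc : G.Adj b c)
    (hcover : ∀ v : Fin 3, v = a ∨ v = b ∨ v = c) : G.Connected := by
  have hreach : ∀ v : Fin 3, G.Reachable v b := by
    intro v
    rcases hcover v with rfl | rfl | rfl
    · exact hab.reachable
    · exact Reachable.refl _
    · exact hbc.symm.reachable
  exact ⟨fun x y => (hreach x).trans (hreach y).symm⟩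

lemma cycle_edgeSet_ncard {n : ℕ} (hn : 3 < n) : (cycleGraph n).edgeSet.ncard = n := by
  obtain ⟨m, rfl⟩ : ∃ m, n = m + 3 := ⟨n - 3, by omega⟩
  classical
  have hdeg : ∀ v : Fin (m+3), (cycleGraph (m+3)).degree v = 2 := fun v =>
    cycleGraph_degree_three_le
  have hsum := (cycleGraph (m+3)).sum_degrees_eq_twice_card_edges
  simp only [hdeg, Finset.sum_const, Finset.card_univ, Fintype.card_fin, smul_eq_mul] at hsum
  rw [Set.ncard_eq_toFinset_card']
  rw [show (cycleGraph (m+3)).edgeSet.toFinset = (cycleGraph (m+3)).edgeFinset from rfl]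
  omega

/-- The three 2-edge paths on `Fin 3`. -/
def P3 (i : Fin 3) : SimpleGraph (Fin 3) :=
  match i with
  | 0 => fromEdgeSet {s(0,1), s(0,2)}
  | 1 => fromEdgeSet {s(0,1), s(1,2)}
  | 2 => fromEdgeSet {s(0,2), s(1,2)}

lemma P3_adj : ∀ i x y, (P3 i).Adj x y ↔
    (match i with
     | 0 => s(x,y) = s(0,1) ∨ s(x,y) = s(0,2)
     | 1 => s(x,y) = s(0,1) ∨ s(x,y) = s(1,2)
     | 2 => s(x,y) = s(0,2) ∨ s(x,y) = s(1,2)) ∧ x ≠ y := by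
  intro i x y
  fin_cases i <;>
    simp [P3, fromEdgeSet_adj, Set.mem_insert_iff, Set.mem_singleton_iff]

lemma conn_P3 (i : Fin 3) : (P3 i).Connected := by
  fin_cases i
  · exact conn3 1 0 2 (by rw [P3_adj]; decide) (by rw [P3_adj]; decide) (by decide)
  · exact conn3 0 1 2 (by rw [P3_adj]; decide) (by rw [P3_adj]; decide) (by decide)
  · exact conn3 0 2 1 (by rw [P3_adj]; decide) (by rw [P3_adj]; decide) (by decide)

lemma symmDiff_P3 : symmDiff (P3 0) (P3 1) = P3 2 ∧ symmDiff (P3 0) (P3 2) = P3 1 ∧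
    symmDiff (P3 1) (P3 2) = P3 0 := by
  refine ⟨?_, ?_, ?_⟩ <;>
  · ext x y
    rw [symmDiff_def, sup_adj, sdiff_adj, sdiff_adj, P3_adj, P3_adj, P3_adj]
    revert x y
    decide

/-- `m(K₃) = 4`, while `m(C_n) = 2` for every cycle on `n > 3` vertices. -/
theorem stmt13 :
    mCode (⊤ : SimpleGraph (Fin 3)) = 4 ∧
    ∀ n : ℕ, 3 < n → mCode (cycleGraph n) = 2 := by
  constructor
  · -- K₃
    set S := {n : ℕ | ∃ 𝒢 : Set (SimpleGraph (Fin 3)),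
      IsConnCode (⊤ : SimpleGraph (Fin 3)) 𝒢 ∧ 𝒢.ncard = n} with hS
    have hub : ∀ n ∈ S, n ≤ 4 := by
      rintro n ⟨𝒢, hcode, hn⟩
      by_contra hlt
      push_neg at hlt
      -- pigeonhole on (Adj 0 1, Adj 0 2)
      set f : SimpleGraph (Fin 3) → Prop × Prop := fun G => (G.Adj 0 1, G.Adj 0 2) with hf
      have hninj : ¬ Set.InjOn f 𝒢 := by
        intro hinj
        have h1 : 𝒢.ncard = (f '' 𝒢).ncard := (Set.ncard_image_of_injOn hinj).symm
        have h2 : (f '' 𝒢).ncard ≤ (Set.univ : Set (Prop × Prop)).ncard :=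
          Set.ncard_le_ncard (Set.subset_univ _) Set.finite_univ
        rw [Set.ncard_univ, Nat.card_eq_fintype_card, Fintype.card_prod] at h2
        rw [Fintype.card_prop] at h2
        omega
      rw [Set.InjOn] at hninj
      push_neg at hninj
      obtain ⟨G₁, hG₁, G₂, hG₂, hfeq, hne⟩ := hninj
      have hconn := hcode.2 G₁ hG₁ G₂ hG₂ hne
      rw [hf] at hfeq
      simp only [Prod.mk.injEq] at hfeq
      refine not_connected_of_isolated (G := symmDiff G₁ G₂) (v := 0) (w := 1)
        (by decide) ?_ hconn
      intro x hx
      rw [symmDiff_def, sup_adj, sdiff_adj, sdiff_adj] at hx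
      have hx0 : x ≠ 0 := by
        rintro rfl
        rcases hx with ⟨h, _⟩ | ⟨h, _⟩
        · exact G₁.irrefl h
        · exact G₂.irrefl h
      have : x = 1 ∨ x = 2 := by omega
      rcases this with rfl | rfl
      · rw [hfeq.1] at hx; tauto
      · rw [hfeq.2] at hx; tauto
    have hlb : 4 ∈ S := by
      refine ⟨{⊥, P3 0, P3 1, P3 2}, ⟨fun G _ => le_top, ?_⟩, ?_⟩
      · have c0 := conn_P3 0
        have c1 := conn_P3 1
        have c2 := conn_P3 2
        obtain ⟨e01, e02, e12⟩ := symmDiff_P3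
        intro G₁ h₁ G₂ h₂ hne
        simp only [Set.mem_insert_iff, Set.mem_singleton_iff] at h₁ h₂
        rcases h₁ with rfl | rfl | rfl | rfl <;> rcases h₂ with rfl | rfl | rfl | rfl <;>
          first
            | exact absurd rfl hne
            | simpa [bot_symmDiff, symmDiff_bot, symmDiff_comm, e01, e02, e12] using
                (by assumption : _)
      · have ne01 : P3 0 ≠ P3 1 := by
          intro h
          have h' : (P3 0).Adj 0 2 ↔ (P3 1).Adj 0 2 := by rw [h]
          rw [P3_adj, P3_adj] at h'
          revert h'; decide
        have ne02 : P3 0 ≠ P3 2 := by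
          intro h
          have h' : (P3 0).Adj 0 1 ↔ (P3 2).Adj 0 1 := by rw [h]
          rw [P3_adj, P3_adj] at h'
          revert h'; decide
        have ne12 : P3 1 ≠ P3 2 := by
          intro h
          have h' : (P3 1).Adj 0 1 ↔ (P3 2).Adj 0 1 := by rw [h]
          rw [P3_adj, P3_adj] at h'
          revert h'; decide
        have neb : ∀ i : Fin 3, (⊥ : SimpleGraph (Fin 3)) ≠ P3 i := by
          intro i h
          have hc := conn_P3 i
          rw [← h] at hc
          exact not_connected_of_isolated (G := (⊥ : SimpleGraph (Fin 3))) (v := 0) (w := 1)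
            (by decide) (fun x hx => hx) hc
        rw [Set.ncard_insert_of_notMem (by simp [neb 0, neb 1, neb 2]) (Set.toFinite _),
          Set.ncard_insert_of_notMem (by simp [ne01, ne02]) (Set.toFinite _),
          Set.ncard_pair ne12]
    have hbdd : BddAbove S := ⟨4, hub⟩
    exact le_antisymm (csSup_le ⟨4, hlb⟩ hub) (le_csSup hbdd hlb)
  · -- cycles
    intro n hn
    set S := {k : ℕ | ∃ 𝒢 : Set (SimpleGraph (Fin n)),
      IsConnCode (cycleGraph n) 𝒢 ∧ 𝒢.ncard = k} with hS
    have hE : (cycleGraph n).edgeSet.ncard = n := cycle_edgeSet_ncard hn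
    have hub : ∀ k ∈ S, k ≤ 2 := by
      rintro k ⟨𝒢, hcode, hk⟩
      by_contra hlt
      push_neg at hlt
      have h3 : 2 < 𝒢.ncard := by omega
      obtain ⟨a, ha, b, hb, c, hc, hab, hac, hbc⟩ :=
        (Set.two_lt_ncard (Set.toFinite _)).mp h3
      have key : ∀ g₁ ∈ 𝒢, ∀ g₂ ∈ 𝒢, g₁ ≠ g₂ →
          n ≤ (symmDiff g₁.edgeSet g₂.edgeSet).ncard + 1 ∧
            symmDiff g₁.edgeSet g₂.edgeSet ⊆ (cycleGraph n).edgeSet := by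
        intro g₁ h₁ g₂ h₂ hne
        constructor
        · have := connected_card_le (symmDiff g₁.edgeSet g₂.edgeSet).ncard
            (symmDiff g₁ g₂) (by rw [edgeSet_symmDiff']) (hcode.2 g₁ h₁ g₂ h₂ hne)
          rwa [Fintype.card_fin] at this
        · calc symmDiff g₁.edgeSet g₂.edgeSet ⊆ g₁.edgeSet ∪ g₂.edgeSet := symmDiff_le_sup
            _ ⊆ (cycleGraph n).edgeSet :=
              Set.union_subset (edgeSet_mono (hcode.1 g₁ h₁)) (edgeSet_mono (hcode.1 g₂ h₂))
      obtain ⟨hX1, hXE⟩ := key a ha b hb hab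
      obtain ⟨hY1, hYE⟩ := key a ha c hc hac
      obtain ⟨hZ1, -⟩ := key b hb c hc hbc
      set X := symmDiff a.edgeSet b.edgeSet
      set Y := symmDiff a.edgeSet c.edgeSet
      have hZeq : symmDiff b.edgeSet c.edgeSet = symmDiff X Y := by
        show _ = symmDiff (symmDiff a.edgeSet b.edgeSet) (symmDiff a.edgeSet c.edgeSet)
        rw [symmDiff_comm a.edgeSet b.edgeSet, symmDiff_assoc,
          symmDiff_symmDiff_cancel_left]
      have hsub : symmDiff X Y ⊆ ((cycleGraph n).edgeSet \ Y) ∪ ((cycleGraph n).edgeSet \ X) := by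
        rw [Set.symmDiff_def]
        exact Set.union_subset_union (Set.diff_subset_diff_left hXE)
          (Set.diff_subset_diff_left hYE)
      have hc1 : ((cycleGraph n).edgeSet \ Y).ncard ≤ 1 := by
        rw [Set.ncard_diff hYE (Set.toFinite _), hE]
        omega
      have hc2 : ((cycleGraph n).edgeSet \ X).ncard ≤ 1 := by
        rw [Set.ncard_diff hXE (Set.toFinite _), hE]
        omega
      have hZ2 : (symmDiff b.edgeSet c.edgeSet).ncard ≤ 2 := by
        rw [hZeq]
        calc (symmDiff X Y).ncard
            ≤ (((cycleGraph n).edgeSet \ Y) ∪ ((cycleGraph n).edgeSet \ X)).ncard :=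
              Set.ncard_le_ncard hsub (Set.toFinite _)
          _ ≤ ((cycleGraph n).edgeSet \ Y).ncard + ((cycleGraph n).edgeSet \ X).ncard :=
              Set.ncard_union_le _ _
          _ ≤ 2 := by omega
      omega
    have hlb : 2 ∈ S := by
      have hbne : (⊥ : SimpleGraph (Fin n)) ≠ cycleGraph n := by
        intro h
        have h2 := cycle_edgeSet_ncard hn
        rw [← h] at h2
        simp at h2
        omega
      refine ⟨{⊥, cycleGraph n}, ⟨?_, ?_⟩, Set.ncard_pair hbne⟩
      · rintro G (rfl | rfl)
        · exact bot_le
        · exact le_rfl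
      · obtain ⟨m, rfl⟩ : ∃ m, n = m + 1 := ⟨n - 1, by omega⟩
        rintro G₁ (rfl | rfl) G₂ (rfl | rfl) hne
        · exact absurd rfl hne
        · rw [bot_symmDiff]; exact cycleGraph_connected
        · rw [symmDiff_bot]; exact cycleGraph_connected
        · exact absurd rfl hne
    have hbdd : BddAbove S := ⟨2, hub⟩
    exact le_antisymm (csSup_le ⟨2, hlb⟩ hub) (le_csSup hbdd hlb)
end

section
/- Let H be a 3-regular (cubic) graph on n vertices with n > 6. Then m(H) ≤ 4, i.e., every connectivity code for H has at most 4 members. -/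
open SimpleGraph

/-- A connected graph on a finite vertex set has at least `card V - 1` edges. -/
lemma aux_conn_card {V : Type*} [Fintype V] {G : SimpleGraph V} [Fintype G.edgeSet]
    (h : G.Connected) : Fintype.card V ≤ G.edgeFinset.card + 1 := by
  classical
  obtain ⟨r⟩ := h.nonempty
  have key : ∀ v : V, v ≠ r → ∃ u, G.Adj v u ∧ G.dist u r < G.dist v r := by
    intro v hv
    obtain ⟨p, hp⟩ := (h.preconnected v r).exists_walk_length_eq_dist
    cases p with
    | nil => exact absurd rfl hv
    | @cons _ u _ hadj q =>
      refine ⟨u, hadj, ?_⟩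
      have h1 : G.dist u r ≤ q.length := G.dist_le q
      rw [Walk.length_cons] at hp
      omega
  choose u hadj hdist using key
  set g : V → Sym2 V := fun v => if hv : v = r then s(r, r) else s(v, u v hv) with hg
  have hmaps : ∀ v ∈ Finset.univ.erase r, g v ∈ G.edgeFinset := by
    intro v hv
    rw [Finset.mem_erase] at hv
    simp only [hg, dif_neg hv.1]
    rw [mem_edgeFinset, mem_edgeSet]
    exact hadj v hv.1
  have hinj : Set.InjOn g ↑(Finset.univ.erase r) := by
    intro x hx y hy hxy
    simp only [Finset.coe_erase, Set.mem_diff, Finset.mem_coe, Set.mem_singleton_iff] at hx hy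
    simp only [hg, dif_neg hx.2, dif_neg hy.2, Sym2.eq_iff] at hxy
    rcases hxy with ⟨h1, h2⟩ | ⟨h1, h2⟩
    · exact h1
    · have d1 := hdist x hx.2
      have d2 := hdist y hy.2
      rw [← h1] at d2
      rw [h2] at d1
      omega
  have hcard := Finset.card_le_card_of_injOn g hmaps hinj
  rw [Finset.card_erase_of_mem (Finset.mem_univ r), Finset.card_univ] at hcard
  have hpos : 1 ≤ Fintype.card V := Fintype.card_pos_iff.mpr ⟨r⟩
  omega


lemma aux_card_symmDiff_parity {α : Type*} [DecidableEq α] (A B : Finset α) :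
    (symmDiff A B).card % 2 = (A.card + B.card) % 2 := by
  have h1 : (A \ B).card + (A ∩ B).card = A.card := Finset.card_sdiff_add_card_inter A B
  have h2 : (B \ A).card + (B ∩ A).card = B.card := Finset.card_sdiff_add_card_inter B A
  have h3 : (symmDiff A B).card = (A \ B).card + (B \ A).card := by
    rw [symmDiff_def, Finset.sup_eq_union]
    exact Finset.card_union_of_disjoint disjoint_sdiff_sdiff
  have h4 : (A ∩ B).card = (B ∩ A).card := by rw [Finset.inter_comm]
  omega

lemma aux_count (P : Fin 5 → Bool) :
    (∑ p : Fin 5 × Fin 5, if P p.1 ≠ P p.2 then (1:ℕ) else 0) ≤ 12 := by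
  revert P; decide

lemma aux_card_eq_sum {α : Type*} [DecidableEq α] {D E : Finset α} (h : D ⊆ E) :
    D.card = ∑ e ∈ E, if e ∈ D then 1 else 0 := by
  rw [Finset.sum_ite_mem, Finset.sum_const, smul_eq_mul, mul_one, Finset.inter_eq_right.mpr h]

/-- The core double-counting argument: there is no family of five finsets inside a ground
finset `E` with `2 * |E| = 3 * n`, `n > 6`, whose pairwise symmetric differences all have
at least `n - 1` elements. -/
lemma aux_main {α : Type*} [DecidableEq α] (n : ℕ) (E : Finset α) (W : Fin 5 → Finset α)
    (h2m : 2 * E.card = 3 * n) (hn : 6 < n)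
    (hWE : ∀ i, W i ⊆ E)
    (hconn : ∀ i j, i ≠ j → n ≤ (symmDiff (W i) (W j)).card + 1) : False := by
  set D : Fin 5 → Fin 5 → Finset α := fun i j => symmDiff (W i) (W j) with hD
  have hDE : ∀ i j, D i j ⊆ E := by
    intro i j
    calc D i j ⊆ W i ∪ W j := Finset.le_iff_subset.mp (symmDiff_le_sup)
      _ ⊆ E := Finset.union_subset (hWE i) (hWE j)
  have hconn' : ∀ i j, i ≠ j → n ≤ (D i j).card + 1 := by
    intro i j h
    rw [hD]
    exact hconn i j h
  have hpar : ∀ i j, (D i j).card % 2 = ((W i).card + (W j).card) % 2 := fun i j =>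
    aux_card_symmDiff_parity _ _
  -- upper bound for the big sum
  have hupper : (∑ p : Fin 5 × Fin 5, (D p.1 p.2).card) ≤ 12 * E.card := by
    calc (∑ p : Fin 5 × Fin 5, (D p.1 p.2).card)
        = ∑ p : Fin 5 × Fin 5, ∑ e ∈ E, (if e ∈ D p.1 p.2 then 1 else 0) :=
          Finset.sum_congr rfl fun p _ => aux_card_eq_sum (hDE p.1 p.2)
      _ = ∑ e ∈ E, ∑ p : Fin 5 × Fin 5, (if e ∈ D p.1 p.2 then 1 else 0) :=
          Finset.sum_comm
      _ ≤ ∑ _e ∈ E, 12 := by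
          refine Finset.sum_le_sum fun e _ => ?_
          obtain ⟨P, hP⟩ : ∃ P : Fin 5 → Bool, ∀ i, P i = decide (e ∈ W i) :=
            ⟨_, fun _ => rfl⟩
          have hbridge : ∀ p : Fin 5 × Fin 5, (e ∈ D p.1 p.2) ↔ (P p.1 ≠ P p.2) := by
            intro p
            rw [hD, hP, hP]
            simp only [Finset.mem_symmDiff, ne_eq, decide_eq_decide]
            tauto
          calc (∑ p : Fin 5 × Fin 5, if e ∈ D p.1 p.2 then (1:ℕ) else 0)
              = ∑ p : Fin 5 × Fin 5, if P p.1 ≠ P p.2 then (1:ℕ) else 0 :=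
                Finset.sum_congr rfl fun p _ => if_congr (hbridge p) rfl rfl
            _ ≤ 12 := aux_count P
      _ = 12 * E.card := by rw [Finset.sum_const, smul_eq_mul, mul_comm]
  -- n is even
  have hneven : n % 2 = 0 := by omega
  -- three indices whose sets have cardinalities of the same parity
  have hQ : ∃ Q : Finset (Fin 5), Q.card = 3 ∧
      ∀ i ∈ Q, ∀ j ∈ Q, ((W i).card + (W j).card) % 2 = 0 := by
    set P : Finset (Fin 5) := Finset.univ.filter (fun i => (W i).card % 2 = 0) with hP
    have hPc : P.card + Pᶜ.card = 5 := by
      rw [Finset.card_add_card_compl]; simp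
    rcases le_or_gt 3 P.card with hc | hc
    · obtain ⟨Q, hQP, hQ3⟩ := Finset.exists_subset_card_eq hc
      refine ⟨Q, hQ3, fun i hi j hj => ?_⟩
      have h1 := Finset.mem_filter.mp (hQP hi)
      have h2 := Finset.mem_filter.mp (hQP hj)
      omega
    · have hc' : 3 ≤ Pᶜ.card := by omega
      obtain ⟨Q, hQP, hQ3⟩ := Finset.exists_subset_card_eq hc'
      refine ⟨Q, hQ3, fun i hi j hj => ?_⟩
      have h1 : (W i).card % 2 = 1 := by
        have := Finset.mem_compl.mp (hQP hi)
        rw [hP, Finset.mem_filter] at this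
        simp only [Finset.mem_univ, true_and] at this
        omega
      have h2 : (W j).card % 2 = 1 := by
        have := Finset.mem_compl.mp (hQP hj)
        rw [hP, Finset.mem_filter] at this
        simp only [Finset.mem_univ, true_and] at this
        omega
      omega
  obtain ⟨Q, hQ3, hQpar⟩ := hQ
  have hTcard : Q.offDiag.card = 6 := by
    rw [Finset.offDiag_card, hQ3]
  have hTod : Q.offDiag ⊆ Finset.univ.offDiag := by
    intro p hp
    rw [Finset.mem_offDiag] at hp
    rw [Finset.mem_offDiag]
    exact ⟨Finset.mem_univ _, Finset.mem_univ _, hp.2.2⟩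
  have hTterm : ∀ p ∈ Q.offDiag, n ≤ (D p.1 p.2).card := by
    intro p hp
    rw [Finset.mem_offDiag] at hp
    have h1 := hconn' p.1 p.2 hp.2.2
    have h2 := hpar p.1 p.2
    have h3 := hQpar p.1 hp.1 p.2 hp.2.1
    omega
  have hOterm : ∀ p ∈ Finset.univ.offDiag \ Q.offDiag, n - 1 ≤ (D p.1 p.2).card := by
    intro p hp
    rw [Finset.mem_sdiff, Finset.mem_offDiag] at hp
    have h1 := hconn' p.1 p.2 hp.1.2.2
    omega
  have hsum1 : 6 * n ≤ ∑ p ∈ Q.offDiag, (D p.1 p.2).card := by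
    have := Finset.card_nsmul_le_sum Q.offDiag (fun p => (D p.1 p.2).card) n hTterm
    rwa [hTcard, smul_eq_mul] at this
  have hsum2 : 14 * (n - 1) ≤ ∑ p ∈ Finset.univ \ Q.offDiag, (D p.1 p.2).card := by
    have hsub : Finset.univ.offDiag \ Q.offDiag ⊆ Finset.univ \ Q.offDiag :=
      Finset.sdiff_subset_sdiff (Finset.subset_univ _) subset_rfl
    have hmono : (∑ p ∈ Finset.univ.offDiag \ Q.offDiag, (D p.1 p.2).card)
        ≤ ∑ p ∈ Finset.univ \ Q.offDiag, (D p.1 p.2).card :=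
      Finset.sum_le_sum_of_subset hsub
    have hcards : (Finset.univ.offDiag \ Q.offDiag).card = 14 := by
      rw [Finset.card_sdiff_of_subset hTod, Finset.offDiag_card, hTcard]
      simp
    have := Finset.card_nsmul_le_sum (Finset.univ.offDiag \ Q.offDiag)
      (fun p => (D p.1 p.2).card) (n - 1) hOterm
    rw [hcards, smul_eq_mul] at this
    omega
  have hsd : (∑ p ∈ Finset.univ \ Q.offDiag, (D p.1 p.2).card)
      + (∑ p ∈ Q.offDiag, (D p.1 p.2).card) = ∑ p : Fin 5 × Fin 5, (D p.1 p.2).card :=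
    Finset.sum_sdiff (Finset.subset_univ Q.offDiag)
  omega

set_option maxHeartbeats 1000000 in
/-- Every cubic graph `H` on more than `6` vertices satisfies `m(H) ≤ 4`. -/
theorem stmt14 {V : Type*} [Fintype V] (H : SimpleGraph V)
    (hn : 6 < Fintype.card V)
    (hreg : ∀ v : V, (H.neighborSet v).ncard = 3) :
    mCode H ≤ 4 := by
  classical
  -- handshake: 2 * |E(H)| = 3 * |V|
  have hdv : ∀ v, H.degree v = 3 := fun v => by
    rw [← SimpleGraph.card_neighborSet_eq_degree, ← Nat.card_eq_fintype_card,
      Nat.card_coe_set_eq, hreg v]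
  have h2m : 2 * H.edgeFinset.card = 3 * Fintype.card V := by
    rw [← SimpleGraph.sum_degrees_eq_twice_card_edges]
    simp [hdv, Finset.sum_const]
    ring
  have key : ∀ 𝒢 : Set (SimpleGraph V), IsConnCode H 𝒢 → 𝒢.ncard ≤ 4 := by
    intro 𝒢 hG
    by_contra hlt
    push_neg at hlt
    have hfin : 𝒢.Finite := by
      by_contra hinf
      rw [Set.Infinite.ncard hinf] at hlt
      omega
    have h5 : 5 ≤ hfin.toFinset.card := by
      rw [← Set.ncard_eq_toFinset_card 𝒢 hfin]; omega
    -- pick five distinct members of the code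
    obtain ⟨f, hfmem, hfinj⟩ : ∃ f : Fin 5 → SimpleGraph V,
        (∀ i, f i ∈ 𝒢) ∧ Function.Injective f := by
      obtain ⟨t, hts, htc⟩ := Finset.exists_subset_card_eq h5
      refine ⟨fun i => ((t.equivFin.symm (Fin.cast htc.symm i)) : SimpleGraph V),
        fun i => hfin.mem_toFinset.mp (hts (t.equivFin.symm (Fin.cast htc.symm i)).2), ?_⟩
      intro i j hij
      have h2 := t.equivFin.symm.injective (Subtype.ext hij)
      exact Fin.ext (by simpa using congrArg Fin.val h2)
    have hle : ∀ i, f i ≤ H := fun i => hG.1 _ (hfmem i)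
    have hconn : ∀ i j, i ≠ j → (symmDiff (f i) (f j)).Connected := fun i j hij =>
      hG.2 _ (hfmem i) _ (hfmem j) (fun hh => hij (hfinj hh))
    have hWE : ∀ i, (f i).edgeFinset ⊆ H.edgeFinset := fun i =>
      SimpleGraph.edgeFinset_mono (hle i)
    have hsymm : ∀ i j, (symmDiff (f i) (f j)).edgeFinset
        = symmDiff (f i).edgeFinset (f j).edgeFinset := by
      intro i j
      ext e
      rw [Finset.mem_symmDiff, mem_edgeFinset, mem_edgeFinset, mem_edgeFinset,
        symmDiff_def, edgeSet_sup, edgeSet_sdiff, edgeSet_sdiff]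
      simp only [Set.sup_eq_union, Set.mem_union, Set.mem_diff]
    have hconn2 : ∀ i j, i ≠ j →
        Fintype.card V ≤ (symmDiff (f i).edgeFinset (f j).edgeFinset).card + 1 := by
      intro i j hij
      rw [← hsymm i j]
      exact aux_conn_card (hconn i j hij)
    exact aux_main (Fintype.card V) H.edgeFinset (fun i => (f i).edgeFinset) h2m hn hWE hconn2
  refine csSup_le' ?_
  rintro k ⟨𝒢, h𝒢, rfl⟩
  exact key 𝒢 h𝒢
end
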